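/- arXiv:1504.00800 — 4 statements merged into one kernel-verified Lean document; each statement's English description precedes it below -/
import Mathlib

section
/- Let n ≥ 1, let A be an n×n nonnegative real matrix such that for all i, j either A_{ij} > 0 or A_{ji} > 0, define B by B_{ij} = max(A_{ij}, (A_{ji})^{-}) where t^{-} = 1/t if t > 0 and t^{-} = 0 otherwise, and let μ = λ(B). Let C be an n×n nonnegative real matrix with max_{1≤k≤n} max_i (C^{⊗k})_{ii} ≤ 1, and let θ = max( μ, max_{1≤k≤n−1} max_{(i_1,…,i_k) ∈ ℕ^k, 1 ≤ i_1+⋯+i_k ≤ n−k} ( max_i (B ⊗ C^{⊗i_1} ⊗ ⋯ ⊗ B ⊗ C^{⊗i_k})_{ii} )^{1/k} ). A positive vector x ∈ ℝ_{>0}^n satisfies both max_j C_{ij} x_j ≤ x_i for all i and ρ(A, x) = θ (i.e., x is a minimizer of the constrained problem) if and only if there exists a positive vector u ∈ ℝ_{>0}^n such that x = D^* ⊗ u, where D is the matrix with entries D_{ij} = max(θ^{-1} B_{ij}, C_{ij}). -/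
open scoped BigOperators

noncomputable section

/-- The max-times spectral radius (maximum geometric cycle mean) of a
nonnegative `n × n` real matrix. -/
def mtSpecRad {n : ℕ} (A : Matrix (Fin n) (Fin n) ℝ) : ℝ :=
  sSup { r : ℝ | ∃ (k : ℕ) (hk : 0 < k), k ≤ n ∧ ∃ f : Fin k → Fin n,
    r = (∏ t : Fin k, A (f t) (f ⟨((t : ℕ) + 1) % k, Nat.mod_lt _ hk⟩)) ^ ((k : ℝ)⁻¹) }

/-- The maximum cycle mean of a real `n × n` matrix (max-plus spectral radius). -/
def mpCycleMean {n : ℕ} (A : Matrix (Fin n) (Fin n) ℝ) : ℝ :=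
  sSup { r : ℝ | ∃ (k : ℕ) (hk : 0 < k), k ≤ n ∧ ∃ f : Fin k → Fin n,
    r = (∑ t : Fin k, A (f t) (f ⟨((t : ℕ) + 1) % k, Nat.mod_lt _ hk⟩)) / (k : ℝ) }

/-- Max-times matrix product. -/
def mtMul {n : ℕ} (A B : Matrix (Fin n) (Fin n) ℝ) : Matrix (Fin n) (Fin n) ℝ :=
  Matrix.of fun i j => ⨆ k : Fin n, A i k * B k j

/-- Max-times matrix powers, with `A^{⊗0} = I`. -/
def mtPow {n : ℕ} (A : Matrix (Fin n) (Fin n) ℝ) : ℕ → Matrix (Fin n) (Fin n) ℝ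
  | 0 => Matrix.of fun i j => if i = j then 1 else 0
  | (k + 1) => mtMul (mtPow A k) A

/-- Max-times Kleene star: entrywise maximum of `I, S, S^{⊗2}, …, S^{⊗(n-1)}`. -/
def mtStar {n : ℕ} (S : Matrix (Fin n) (Fin n) ℝ) : Matrix (Fin n) (Fin n) ℝ :=
  Matrix.of fun i j => ⨆ k : Fin n, mtPow S (k : ℕ) i j

/-- Max-times matrix-vector product. -/
def mtVecMul {n : ℕ} (S : Matrix (Fin n) (Fin n) ℝ) (u : Fin n → ℝ) : Fin n → ℝ :=
  fun i => ⨆ j, S i j * u j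

/-- Max-plus matrix product. -/
def mpMul {n : ℕ} (A B : Matrix (Fin n) (Fin n) ℝ) : Matrix (Fin n) (Fin n) ℝ :=
  Matrix.of fun i j => ⨆ k : Fin n, (A i k + B k j)

/-- `mpPow A k` is the max-plus power `A^{⊗(k+1)}`. -/
def mpPow {n : ℕ} (A : Matrix (Fin n) (Fin n) ℝ) : ℕ → Matrix (Fin n) (Fin n) ℝ
  | 0 => A
  | (k + 1) => mpMul (mpPow A k) A

/-- Max-plus Kleene star: `S^*_{ii} = max(0, max_{1≤k≤n-1} (S^{⊗k})_{ii})` and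
`S^*_{ij} = max_{1≤k≤n-1} (S^{⊗k})_{ij}` for `i ≠ j`. -/
def mpStar {n : ℕ} (S : Matrix (Fin n) (Fin n) ℝ) : Matrix (Fin n) (Fin n) ℝ :=
  Matrix.of fun i j =>
    if i = j then max 0 (⨆ k : Fin (n - 1), mpPow S (k : ℕ) i j)
    else ⨆ k : Fin (n - 1), mpPow S (k : ℕ) i j

/-- Max-plus matrix-vector product. -/
def mpVecMul {n : ℕ} (S : Matrix (Fin n) (Fin n) ℝ) (x : Fin n → ℝ) : Fin n → ℝ :=
  fun i => ⨆ j, (S i j + x j)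

/-- Chebyshev-like (max-times) distance between a nonnegative matrix `A` and the
rank-one reciprocal matrix with entries `x i / x j`. -/
def mtRho {n : ℕ} (A : Matrix (Fin n) (Fin n) ℝ) (x : Fin n → ℝ) : ℝ :=
  max (⨆ p : Fin n × Fin n, A p.1 p.2 * x p.2 / x p.1)
    (sSup { r : ℝ | ∃ i j, 0 < A i j ∧ r = x i / (A i j * x j) })

/-- The alternating max-times product `A ⊗ C^{⊗ i₁} ⊗ A ⊗ C^{⊗ i₂} ⊗ ⋯ ⊗ A ⊗ C^{⊗ i_k}`. -/
def mtChain {n : ℕ} (A C : Matrix (Fin n) (Fin n) ℝ) :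
    (k : ℕ) → (Fin k → ℕ) → Matrix (Fin n) (Fin n) ℝ
  | 0, _ => Matrix.of fun i j => if i = j then 1 else 0
  | (k + 1), f => mtMul (mtMul A (mtPow C (f 0))) (mtChain A C k (fun t => f t.succ))

/-- The optimal value `θ` of the constrained max-times approximation problem. -/
def mtTheta {n : ℕ} (A C : Matrix (Fin n) (Fin n) ℝ) : ℝ :=
  max (mtSpecRad A)
    (sSup { r : ℝ | ∃ k : ℕ, 0 < k ∧ k ≤ n - 1 ∧ ∃ f : Fin k → ℕ,
      1 ≤ ∑ t, f t ∧ (∑ t, f t) ≤ n - k ∧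
      r = (⨆ i, mtChain A C k f i i) ^ ((k : ℝ)⁻¹) })


namespace MtAux
variable {n : ℕ}

lemma csup_exists [NeZero n] (f : Fin n → ℝ) : ∃ j, (⨆ i, f i) = f j := by
  obtain ⟨j, hj⟩ := Finite.exists_max f
  exact ⟨j, le_antisymm (ciSup_le hj) (le_ciSup (Set.finite_range f).bddAbove j)⟩

lemma le_csup (f : Fin n → ℝ) (j : Fin n) : f j ≤ ⨆ i, f i :=
  le_ciSup (Set.finite_range f).bddAbove j

lemma csup_le [NeZero n] {f : Fin n → ℝ} {a : ℝ} (h : ∀ i, f i ≤ a) : (⨆ i, f i) ≤ a :=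
  ciSup_le h

lemma csup_nonneg [NeZero n] {f : Fin n → ℝ} (h : ∀ i, 0 ≤ f i) : 0 ≤ ⨆ i, f i :=
  le_trans (h (Classical.arbitrary _)) (le_csup f _)

section
variable {X Y Z S : Matrix (Fin n) (Fin n) ℝ}

lemma mtMul_entry (X Y : Matrix (Fin n) (Fin n) ℝ) (i j : Fin n) :
    mtMul X Y i j = ⨆ k : Fin n, X i k * Y k j := rfl

lemma le_mtMul (X Y : Matrix (Fin n) (Fin n) ℝ) (i l j : Fin n) :
    X i l * Y l j ≤ mtMul X Y i j := le_csup (fun l => X i l * Y l j) l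

lemma mtMul_nonneg [NeZero n] (hX : ∀ i j, 0 ≤ X i j) (hY : ∀ i j, 0 ≤ Y i j) :
    ∀ i j, 0 ≤ mtMul X Y i j := fun i j =>
  csup_nonneg fun k => mul_nonneg (hX i k) (hY k j)

lemma mtMul_le [NeZero n] {a : ℝ} {i j : Fin n}
    (h : ∀ l, X i l * Y l j ≤ a) : mtMul X Y i j ≤ a := csup_le h

lemma mtPow_nonneg [NeZero n] (hS : ∀ i j, 0 ≤ S i j) (k : ℕ) :
    ∀ i j, 0 ≤ mtPow S k i j := by
  induction k with
  | zero => intro i j; simp only [mtPow, Matrix.of_apply]; positivity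
  | succ k ih => exact mtMul_nonneg ih hS

lemma mtMul_id_left [NeZero n] (hS : ∀ i j, 0 ≤ S i j) :
    mtMul (mtPow S 0) S = S := by
  funext i j
  refine le_antisymm (mtMul_le fun l => ?_) ?_
  · simp only [mtPow, Matrix.of_apply]
    rcases eq_or_ne i l with rfl | h
    · simp
    · simp [h, hS i j]
  · have := le_mtMul (mtPow S 0) S i i j
    simpa [mtPow] using this

lemma mtMul_id_right [NeZero n] (hS : ∀ i j, 0 ≤ S i j) :
    mtMul S (mtPow S 0) = S := by
  funext i j
  refine le_antisymm (mtMul_le fun l => ?_) ?_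
  · simp only [mtPow, Matrix.of_apply]
    rcases eq_or_ne l j with rfl | h
    · simp
    · simp [h, hS i j]
  · have := le_mtMul S (mtPow S 0) i j j
    simpa [mtPow] using this

lemma mtMul_assoc [NeZero n] (hX : ∀ i j, 0 ≤ X i j) (hY : ∀ i j, 0 ≤ Y i j)
    (hZ : ∀ i j, 0 ≤ Z i j) : mtMul (mtMul X Y) Z = mtMul X (mtMul Y Z) := by
  funext i j
  refine le_antisymm (mtMul_le fun l => ?_) (mtMul_le fun m => ?_)
  · obtain ⟨m, hm⟩ := csup_exists (fun m => X i m * Y m l)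
    rw [mtMul_entry, hm]
    calc X i m * Y m l * Z l j = X i m * (Y m l * Z l j) := by ring
    _ ≤ X i m * mtMul Y Z m j :=
        mul_le_mul_of_nonneg_left (le_mtMul _ _ _ _ _) (hX i m)
    _ ≤ _ := le_mtMul _ _ _ _ _
  · obtain ⟨l, hl⟩ := csup_exists (fun l => Y m l * Z l j)
    rw [mtMul_entry, hl]
    calc X i m * (Y m l * Z l j) = X i m * Y m l * Z l j := by ring
    _ ≤ mtMul X Y i l * Z l j :=
        mul_le_mul_of_nonneg_right (le_mtMul _ _ _ _ _) (hZ l j)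
    _ ≤ _ := le_mtMul _ _ _ _ _

lemma mtPow_succ_left [NeZero n] (hS : ∀ i j, 0 ≤ S i j) (k : ℕ) :
    mtPow S (k + 1) = mtMul S (mtPow S k) := by
  induction k with
  | zero => show mtMul (mtPow S 0) S = mtMul S (mtPow S 0)
            rw [mtMul_id_left hS, mtMul_id_right hS]
  | succ k ih =>
      show mtMul (mtPow S (k+1)) S = _
      rw [ih, mtMul_assoc hS (mtPow_nonneg hS k) hS, ← ih]
      rfl



end

section
variable {S : Matrix (Fin n) (Fin n) ℝ}

/-- Product of `S` along the path starting at `a` with successive nodes `s`. -/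
def pprod (S : Matrix (Fin n) (Fin n) ℝ) : Fin n → List (Fin n) → ℝ
  | _, [] => 1
  | a, v :: s => S a v * pprod S v s

/-- Last node of the path `a :: s`. -/
def lastP (a : Fin n) (s : List (Fin n)) : Fin n := (a :: s).getLast (List.cons_ne_nil _ _)

@[simp] lemma pprod_nil (a : Fin n) : pprod S a [] = 1 := rfl
@[simp] lemma pprod_cons (a v : Fin n) (s : List (Fin n)) :
    pprod S a (v :: s) = S a v * pprod S v s := rfl

@[simp] lemma lastP_nil (a : Fin n) : lastP a ([] : List (Fin n)) = a := rfl
@[simp] lemma lastP_cons (a v : Fin n) (s : List (Fin n)) :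
    lastP a (v :: s) = lastP v s := by
  simp [lastP, List.getLast_cons]

lemma lastP_append (a v : Fin n) (s t : List (Fin n)) :
    lastP a (s ++ v :: t) = lastP v t := by
  induction s generalizing a with
  | nil => simp
  | cons w s ih => simpa using ih w

lemma pprod_nonneg (hS : ∀ i j, 0 ≤ S i j) (a : Fin n) (s : List (Fin n)) :
    0 ≤ pprod S a s := by
  induction s generalizing a with
  | nil => norm_num
  | cons v s ih => exact mul_nonneg (hS a v) (ih v)

lemma pprod_append (a v : Fin n) (s t : List (Fin n)) :
    pprod S a (s ++ v :: t) = pprod S a (s ++ [v]) * pprod S v t := by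
  induction s generalizing a with
  | nil => simp [mul_assoc]
  | cons w s ih => simp [ih w, mul_assoc]

lemma pprod_le_mtPow [NeZero n] (hS : ∀ i j, 0 ≤ S i j) (a : Fin n) (s : List (Fin n)) :
    pprod S a s ≤ mtPow S s.length a (lastP a s) := by
  induction s generalizing a with
  | nil => simp [mtPow]
  | cons v s ih =>
      rw [List.length_cons, mtPow_succ_left hS, pprod_cons, lastP_cons]
      calc S a v * pprod S v s ≤ S a v * mtPow S s.length v (lastP v s) :=
            mul_le_mul_of_nonneg_left (ih v) (hS a v)
      _ ≤ _ := le_mtMul _ _ _ _ _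

lemma mtPow_attain [NeZero n] (hS : ∀ i j, 0 ≤ S i j) (k : ℕ) (a j : Fin n) :
    mtPow S k a j = 0 ∨
      ∃ s : List (Fin n), s.length = k ∧ lastP a s = j ∧ mtPow S k a j = pprod S a s := by
  induction k generalizing a with
  | zero =>
      rcases eq_or_ne a j with rfl | h
      · exact Or.inr ⟨[], rfl, rfl, by simp [mtPow]⟩
      · exact Or.inl (by simp [mtPow, h])
  | succ k ih =>
      rw [mtPow_succ_left hS]
      obtain ⟨v, hv⟩ := csup_exists (fun v => S a v * mtPow S k v j)
      rw [mtMul_entry, hv]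
      rcases ih v with h0 | ⟨s, hlen, hlast, hp⟩
      · exact Or.inl (by rw [h0, mul_zero])
      · exact Or.inr ⟨v :: s, by simp [hlen], by simpa using hlast, by rw [hp]; rfl⟩

/-- Any list of more than `n` elements of `Fin n` contains a duplicate. -/
lemma exists_dup {L : List (Fin n)} (h : n < L.length) :
    ∃ (u : Fin n) (l1 l2 l3 : List (Fin n)), L = l1 ++ u :: l2 ++ u :: l3 := by
  have hnd : ¬ L.Nodup := fun hd => absurd (hd.length_le_card) (by simpa using h.not_ge)
  clear h
  induction L with
  | nil => simp at hnd
  | cons x L ih =>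
      by_cases hx : x ∈ L
      · obtain ⟨l2, l3, rfl⟩ := List.append_of_mem hx
        exact ⟨x, [], l2, l3, rfl⟩
      · have : ¬ L.Nodup := fun hd => hnd (List.nodup_cons.mpr ⟨hx, hd⟩)
        obtain ⟨u, l1, l2, l3, rfl⟩ := ih this
        exact ⟨u, x :: l1, l2, l3, rfl⟩

lemma mtStar_entry (S : Matrix (Fin n) (Fin n) ℝ) (i j : Fin n) :
    mtStar S i j = ⨆ k : Fin n, mtPow S (k : ℕ) i j := rfl

lemma mtPow_le_mtStar [NeZero n] {m : ℕ} (hm : m < n) (i j : Fin n) :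
    mtPow S m i j ≤ mtStar S i j :=
  le_csup (fun k : Fin n => mtPow S (k : ℕ) i j) ⟨m, hm⟩

lemma one_le_mtStar_diag [NeZero n] (S : Matrix (Fin n) (Fin n) ℝ) (i : Fin n) :
    1 ≤ mtStar S i i := by
  have h0 : (0:ℕ) < n := Nat.pos_of_ne_zero (NeZero.ne n)
  have := mtPow_le_mtStar (S := S) h0 i i
  simpa [mtPow] using this

lemma mtStar_nonneg [NeZero n] (hS : ∀ i j, 0 ≤ S i j) (i j : Fin n) :
    0 ≤ mtStar S i j :=
  csup_nonneg fun k => mtPow_nonneg hS _ i j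

lemma cons_self_decomp {a : Fin n} {s : List (Fin n)} (hs : s ≠ [])
    (hc : lastP a s = a) : a :: s = (a :: s.dropLast) ++ [a] := by
  conv_lhs => rw [show s = s.dropLast ++ [s.getLast hs] from (List.dropLast_append_getLast hs).symm]
  have : s.getLast hs = a := by
    rw [← hc]; simp [lastP, List.getLast_cons hs]
  rw [this]; simp

/-- If all cycles of length at most `n` have product at most 1, then all cycles do. -/
lemma cycle_all (hS : ∀ i j, 0 ≤ S i j)
    (hshort : ∀ a s, s.length ≤ n → lastP a s = a → pprod S a s ≤ 1) :
    ∀ a s, lastP a s = a → pprod S a s ≤ 1 := by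
  suffices H : ∀ m a (s : List (Fin n)), s.length ≤ m → lastP a s = a → pprod S a s ≤ 1 by
    intro a s hc; exact H s.length a s le_rfl hc
  intro m
  induction m with
  | zero =>
      intro a s hsl hc
      exact hshort a s (le_trans hsl (Nat.zero_le n)) hc
  | succ m ih =>
      intro a s hsl hc
      by_cases hlong : s.length ≤ n
      · exact hshort a s hlong hc
      push_neg at hlong
      have hs : s ≠ [] := by
        intro h; rw [h] at hlong; simp at hlong
      have hdl : n < (a :: s.dropLast).length := by
        simp [List.length_dropLast]
        omega
      obtain ⟨u, l1, l2, l3, heq⟩ := exists_dup hdl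
      have hfull : a :: s = l1 ++ u :: l2 ++ u :: (l3 ++ [a]) := by
        rw [cons_self_decomp hs hc, heq]; simp
      rcases l1 with _ | ⟨c, l1'⟩
      · -- the duplicate starts at `a` itself
        simp only [List.nil_append, List.cons_append] at hfull
        obtain ⟨hau, hseq⟩ := List.cons_eq_cons.mp hfull
        subst hau
        rw [hseq, pprod_append]
        have h1 : pprod S a (l2 ++ [a]) ≤ 1 := by
          refine ih a (l2 ++ [a]) ?_ ?_
          · have : s.length = l2.length + l3.length + 2 := by rw [hseq]; simp; omega
            simp; omega
          · have := lastP_append a a l2 ([] : List (Fin n)); simpa using this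
        have h2 : pprod S a (l3 ++ [a]) ≤ 1 := by
          refine ih a (l3 ++ [a]) ?_ ?_
          · have : s.length = l2.length + l3.length + 2 := by rw [hseq]; simp; omega
            simp; omega
          · have := lastP_append a a l3 ([] : List (Fin n)); simpa using this
        exact mul_le_one₀ h1 (pprod_nonneg hS _ _) h2
      · -- the duplicate is inside
        simp only [List.cons_append, List.append_assoc] at hfull
        obtain ⟨hac, hseq⟩ := List.cons_eq_cons.mp hfull
        subst hac
        have hlen : s.length = l1'.length + l2.length + l3.length + 3 := by
          rw [hseq]; simp; omega
        rw [hseq, pprod_append]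
        rw [pprod_append u u l2 (l3 ++ [a])]
        have hmid : pprod S u (l2 ++ [u]) ≤ 1 := by
          refine ih u (l2 ++ [u]) (by simp; omega) ?_
          have := lastP_append u u l2 ([] : List (Fin n)); simpa using this
        have houter : pprod S a (l1' ++ [u]) * pprod S u (l3 ++ [a]) ≤ 1 := by
          rw [← pprod_append a u l1' (l3 ++ [a])]
          refine ih a (l1' ++ u :: (l3 ++ [a])) (by simp; omega) ?_
          rw [lastP_append]
          have := lastP_append u a l3 ([] : List (Fin n)); simpa using this
        calc pprod S a (l1' ++ [u]) * (pprod S u (l2 ++ [u]) * pprod S u (l3 ++ [a]))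
            ≤ pprod S a (l1' ++ [u]) * (1 * pprod S u (l3 ++ [a])) := by
              refine mul_le_mul_of_nonneg_left ?_ (pprod_nonneg hS _ _)
              exact mul_le_mul_of_nonneg_right hmid (pprod_nonneg hS _ _)
        _ = pprod S a (l1' ++ [u]) * pprod S u (l3 ++ [a]) := by ring
        _ ≤ 1 := houter

/-- Path products are bounded by the Kleene star when all cycles have product at most 1. -/
lemma pprod_le_mtStar [NeZero n] (hS : ∀ i j, 0 ≤ S i j)
    (hcyc : ∀ a s, lastP a s = a → pprod S a s ≤ 1) :
    ∀ a s, pprod S a s ≤ mtStar S a (lastP a s) := by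
  suffices H : ∀ m a (s : List (Fin n)), s.length ≤ m → pprod S a s ≤ mtStar S a (lastP a s) by
    intro a s; exact H s.length a s le_rfl
  have hpos : 0 < n := Nat.pos_of_ne_zero (NeZero.ne n)
  intro m
  induction m with
  | zero =>
      intro a s hsl
      have : s = [] := List.length_eq_zero_iff.mp (Nat.le_zero.mp hsl)
      subst this
      simpa using one_le_mtStar_diag S a
  | succ m ih =>
      intro a s hsl
      by_cases hshortlen : s.length < n
      · exact le_trans (pprod_le_mtPow hS a s) (mtPow_le_mtStar hshortlen a (lastP a s))
      push_neg at hshortlen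
      have hdl : n < (a :: s).length := by simp; omega
      obtain ⟨u, l1, l2, l3, hfull⟩ := exists_dup hdl
      rcases l1 with _ | ⟨c, l1'⟩
      · simp only [List.nil_append, List.cons_append] at hfull
        obtain ⟨hau, hseq⟩ := List.cons_eq_cons.mp hfull
        subst hau
        have hlen : s.length = l2.length + l3.length + 1 := by rw [hseq]; simp; omega
        rw [hseq, pprod_append, lastP_append]
        have h1 : pprod S a (l2 ++ [a]) ≤ 1 := by
          refine hcyc a (l2 ++ [a]) ?_
          have := lastP_append a a l2 ([] : List (Fin n)); simpa using this
        calc pprod S a (l2 ++ [a]) * pprod S a l3 ≤ 1 * pprod S a l3 :=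
              mul_le_mul_of_nonneg_right h1 (pprod_nonneg hS _ _)
        _ = pprod S a l3 := one_mul _
        _ ≤ _ := ih a l3 (by omega)
      · simp only [List.cons_append, List.append_assoc] at hfull
        obtain ⟨hac, hseq⟩ := List.cons_eq_cons.mp hfull
        subst hac
        have hlen : s.length = l1'.length + l2.length + l3.length + 2 := by
          rw [hseq]; simp; omega
        rw [hseq, pprod_append, pprod_append u u l2 l3, lastP_append, lastP_append]
        have hmid : pprod S u (l2 ++ [u]) ≤ 1 := by
          refine hcyc u (l2 ++ [u]) ?_
          have := lastP_append u u l2 ([] : List (Fin n)); simpa using this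
        have houter : pprod S a (l1' ++ [u]) * pprod S u l3 ≤ mtStar S a (lastP u l3) := by
          rw [← pprod_append a u l1' l3]
          have := ih a (l1' ++ u :: l3) (by simp; omega)
          rwa [lastP_append] at this
        calc pprod S a (l1' ++ [u]) * (pprod S u (l2 ++ [u]) * pprod S u l3)
            ≤ pprod S a (l1' ++ [u]) * (1 * pprod S u l3) := by
              refine mul_le_mul_of_nonneg_left ?_ (pprod_nonneg hS _ _)
              exact mul_le_mul_of_nonneg_right hmid (pprod_nonneg hS _ _)
        _ = pprod S a (l1' ++ [u]) * pprod S u l3 := by ring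
        _ ≤ _ := houter

end

section
variable {P Q S : Matrix (Fin n) (Fin n) ℝ}

/-- Product along a path with boolean-labelled edges: `true` edges use `P`,
`false` edges use `Q`. -/
def sprod (P Q : Matrix (Fin n) (Fin n) ℝ) : Fin n → List (Bool × Fin n) → ℝ
  | _, [] => 1
  | a, e :: t => (if e.1 then P a e.2 else Q a e.2) * sprod P Q e.2 t

def lastS (a : Fin n) (t : List (Bool × Fin n)) : Fin n := lastP a (t.map Prod.snd)

@[simp] lemma sprod_nil (a : Fin n) : sprod P Q a [] = 1 := rfl
@[simp] lemma sprod_cons (a : Fin n) (e : Bool × Fin n) (t : List (Bool × Fin n)) :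
    sprod P Q a (e :: t) = (if e.1 then P a e.2 else Q a e.2) * sprod P Q e.2 t := rfl

@[simp] lemma lastS_nil (a : Fin n) : lastS a ([] : List (Bool × Fin n)) = a := rfl
@[simp] lemma lastS_cons (a : Fin n) (e : Bool × Fin n) (t : List (Bool × Fin n)) :
    lastS a (e :: t) = lastS e.2 t := by simp [lastS]

lemma lastS_append (a : Fin n) (t t' : List (Bool × Fin n)) :
    lastS a (t ++ t') = lastS (lastS a t) t' := by
  induction t generalizing a with
  | nil => simp
  | cons e t ih => simp [ih]

lemma sprod_nonneg (hP : ∀ i j, 0 ≤ P i j) (hQ : ∀ i j, 0 ≤ Q i j)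
    (a : Fin n) (t : List (Bool × Fin n)) : 0 ≤ sprod P Q a t := by
  induction t generalizing a with
  | nil => norm_num
  | cons e t ih =>
      refine mul_nonneg ?_ (ih e.2)
      split <;> [exact hP a e.2; exact hQ a e.2]

lemma sprod_append (a : Fin n) (t t' : List (Bool × Fin n)) :
    sprod P Q a (t ++ t') = sprod P Q a t * sprod P Q (lastS a t) t' := by
  induction t generalizing a with
  | nil => simp
  | cons e t ih => simp [ih e.2, mul_assoc]

/-- Each entry of the pointwise max of `P` and `Q` is an entry of `P` or `Q`;
hence any path product for the max matrix is a labelled path product. -/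
lemma exists_sel (a : Fin n) (s : List (Fin n)) :
    ∃ t : List (Bool × Fin n), t.map Prod.snd = s ∧
      pprod (Matrix.of fun i j => max (P i j) (Q i j)) a s = sprod P Q a t := by
  induction s generalizing a with
  | nil => exact ⟨[], rfl, rfl⟩
  | cons v s ih =>
      obtain ⟨t, hmap, hp⟩ := ih v
      rcases le_total (P a v) (Q a v) with h | h
      · refine ⟨(false, v) :: t, by simp [hmap], ?_⟩
        simp only [pprod_cons, hp, sprod_cons, Matrix.of_apply, if_neg Bool.false_ne_true]
        rw [max_eq_right h]
      · refine ⟨(true, v) :: t, by simp [hmap], ?_⟩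
        simp only [pprod_cons, hp, sprod_cons, Matrix.of_apply]
        rw [max_eq_left h]; norm_num

lemma sprod_all_false {t : List (Bool × Fin n)} (h : ∀ e ∈ t, e.1 = false) (a : Fin n) :
    sprod P Q a t = pprod Q a (t.map Prod.snd) := by
  induction t generalizing a with
  | nil => rfl
  | cons e t ih =>
      have he : e.1 = false := h e (by simp)
      simp [he, ih (fun e' he' => h e' (by simp [he']))]

lemma sprod_all_true {t : List (Bool × Fin n)} (h : ∀ e ∈ t, e.1 = true) (a : Fin n) :
    sprod P Q a t = pprod P a (t.map Prod.snd) := by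
  induction t generalizing a with
  | nil => rfl
  | cons e t ih =>
      have he : e.1 = true := h e (by simp)
      simp [he, ih (fun e' he' => h e' (by simp [he']))]

lemma pprod_scale (c : ℝ) (S : Matrix (Fin n) (Fin n) ℝ) (a : Fin n) (s : List (Fin n)) :
    pprod (Matrix.of fun i j => c * S i j) a s = c ^ s.length * pprod S a s := by
  induction s generalizing a with
  | nil => simp
  | cons v s ih => simp [ih v, pow_succ]; ring

end

section
variable {B C : Matrix (Fin n) (Fin n) ℝ} {θ : ℝ}

/-- `listChain B C [i₁, …, i_k] = B ⊗ C^{i₁} ⊗ B ⊗ C^{i₂} ⊗ ⋯ ⊗ B ⊗ C^{i_k}`. -/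
def listChain (B C : Matrix (Fin n) (Fin n) ℝ) : List ℕ → Matrix (Fin n) (Fin n) ℝ
  | [] => mtPow B 0
  | i :: f => mtMul (mtMul B (mtPow C i)) (listChain B C f)

lemma mtChain_eq_listChain (B C : Matrix (Fin n) (Fin n) ℝ) :
    ∀ (k : ℕ) (f : Fin k → ℕ), mtChain B C k f = listChain B C (List.ofFn f) := by
  intro k
  induction k with
  | zero => intro f; rfl
  | succ k ih =>
      intro f
      rw [List.ofFn_succ]
      show mtMul (mtMul B (mtPow C (f 0))) (mtChain B C k (fun t => f t.succ)) = _
      rw [ih]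
      rfl

lemma listChain_nonneg [NeZero n] (hB : ∀ i j, 0 ≤ B i j) (hC : ∀ i j, 0 ≤ C i j)
    (f : List ℕ) : ∀ i j, 0 ≤ listChain B C f i j := by
  induction f with
  | nil => exact mtPow_nonneg hB 0
  | cons i f ih =>
      exact mtMul_nonneg (mtMul_nonneg hB (mtPow_nonneg hC i)) ih

lemma dropWhile_head_ne {α : Type*} {p : α → Bool} {l : List α} {a : α} {t : List α}
    (h : l.dropWhile p = a :: t) : p a = false := by
  induction l with
  | nil => simp at h
  | cons x l ih =>
      rw [List.dropWhile_cons] at h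
      by_cases hx : p x = true
      · rw [if_pos hx] at h; exact ih h
      · rw [if_neg hx] at h
        obtain ⟨rfl, -⟩ := List.cons_eq_cons.mp h
        simpa using hx

/-- The parsing lemma: a labelled path product starting with a `true` (i.e. `θ⁻¹B`)
edge is bounded by `θ^{-k}` times an entry of an alternating chain. -/
lemma parse [NeZero n] (hB : ∀ i j, 0 ≤ B i j) (hC : ∀ i j, 0 ≤ C i j) (hθ : 0 < θ) :
    ∀ m (t : List (Bool × Fin n)) (a u : Fin n) (t' : List (Bool × Fin n)),
      t.length ≤ m → t = (true, u) :: t' →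
      ∃ f : List ℕ, 0 < f.length ∧ f.length = t.countP (fun e => e.1) ∧
        f.sum = t.countP (fun e => !e.1) ∧
        sprod (Matrix.of fun i j => θ⁻¹ * B i j) C a t
          ≤ θ⁻¹ ^ f.length * listChain B C f a (lastS a t) := by
  intro m
  induction m with
  | zero => intro t a u t' hlen ht; subst ht; simp at hlen
  | succ m ih =>
      intro t a u t' hlen ht
      subst ht
      set run := t'.takeWhile (fun e => !e.1) with hrun
      set rem := t'.dropWhile (fun e => !e.1) with hrem
      have hsplit : t' = run ++ rem := List.takeWhile_append_dropWhile.symm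
      have hrunf : ∀ e ∈ run, e.1 = false := by
        intro e he
        have := List.mem_takeWhile_imp he
        simpa using this
      set w := lastS u run with hw
      have hCrun : sprod (Matrix.of fun i j => θ⁻¹ * B i j) C u run
          ≤ mtPow C run.length u w := by
        rw [sprod_all_false hrunf]
        have := pprod_le_mtPow hC u (run.map Prod.snd)
        simpa [lastS, hw] using this
      have hsnn : 0 ≤ sprod (Matrix.of fun i j => θ⁻¹ * B i j) C u run :=
        sprod_nonneg (fun i j => mul_nonneg (by positivity) (hB i j)) hC u run
      have hθinn : (0:ℝ) ≤ θ⁻¹ := by positivity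
      rcases hrem2 : rem with _ | ⟨e, rem'⟩
      · -- no more true edges
        refine ⟨[run.length], by norm_num, ?_, ?_, ?_⟩
        · rw [hsplit, hrem2]
          simp only [List.countP_cons, List.countP_append]
          rw [List.countP_eq_zero.mpr (by intro e he; simp [hrunf e he])]
          simp
        · rw [hsplit, hrem2]
          simp only [List.countP_cons, List.countP_append]
          rw [List.countP_eq_length.mpr (by intro e he; simp [hrunf e he])]
          simp
        · have hlast : lastS a ((true, u) :: t') = w := by
            rw [hsplit, hrem2]; simp [lastS_append, hw]
          rw [hlast, hsplit, hrem2, List.append_nil]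
          have hBau : (0:ℝ) ≤ θ⁻¹ * B a u := mul_nonneg (by positivity) (hB a u)
          have : listChain B C [run.length] = mtMul B (mtPow C run.length) := by
            show mtMul (mtMul B (mtPow C run.length)) (mtPow B 0) = _
            rw [show (mtPow B 0 : Matrix (Fin n) (Fin n) ℝ)
                = mtPow (mtMul B (mtPow C run.length)) 0 from rfl,
              mtMul_id_right (mtMul_nonneg hB (mtPow_nonneg hC _))]
          rw [this]
          simp only [sprod_cons, Matrix.of_apply, if_pos, List.length_singleton, pow_one]
          calc θ⁻¹ * B a u * sprod (Matrix.of fun i j => θ⁻¹ * B i j) C u run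
              ≤ θ⁻¹ * B a u * mtPow C run.length u w :=
                mul_le_mul_of_nonneg_left hCrun hBau
          _ = θ⁻¹ * (B a u * mtPow C run.length u w) := by ring
          _ ≤ θ⁻¹ * mtMul B (mtPow C run.length) a w :=
                mul_le_mul_of_nonneg_left (le_mtMul _ _ _ _ _) hθinn
      · -- `rem` starts with a true edge
        have hetrue : e.1 = true := by
          have := dropWhile_head_ne (p := fun e : Bool × Fin n => !e.1)
            (l := t') (by rw [← hrem, hrem2])
          simpa using this
        obtain ⟨b, v⟩ := e
        simp only at hetrue
        subst hetrue
        have hlenrem : rem.length ≤ m := by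
          have : t'.length = run.length + rem.length := by rw [hsplit]; simp
          simp only [List.length_cons] at hlen
          omega
        obtain ⟨f', hf'pos, hf'true, hf'false, hf'bound⟩ :=
          ih rem w v rem' hlenrem hrem2
        have hc0 : List.countP (fun e : Bool × Fin n => e.1) run = 0 :=
          List.countP_eq_zero.mpr (by intro e he; simp [hrunf e he])
        have hc1 : List.countP (fun e : Bool × Fin n => !e.1) run = run.length :=
          List.countP_eq_length.mpr (by intro e he; simp [hrunf e he])
        refine ⟨run.length :: f', by simp, ?_, ?_, ?_⟩
        · rw [hsplit]
          simp only [List.countP_cons, List.countP_append, List.length_cons, hc0, hf'true]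
          norm_num
        · rw [hsplit]
          simp only [List.sum_cons, List.countP_cons, List.countP_append, hc1, hf'false]
          norm_num
        · set z := lastS w rem with hz
          have hlast : lastS a ((true, u) :: t') = z := by
            rw [hsplit]; simp [lastS_append, hw, hz]
          rw [hlast]
          have hchain : B a u * mtPow C run.length u w * listChain B C f' w z
              ≤ listChain B C (run.length :: f') a z := by
            calc B a u * mtPow C run.length u w * listChain B C f' w z
                ≤ mtMul B (mtPow C run.length) a w * listChain B C f' w z :=
                  mul_le_mul_of_nonneg_right (le_mtMul _ _ _ _ _)
                    (listChain_nonneg hB hC f' w z)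
            _ ≤ _ := le_mtMul _ _ _ _ _
          have hrest : sprod (Matrix.of fun i j => θ⁻¹ * B i j) C u t'
              ≤ mtPow C run.length u w * (θ⁻¹ ^ f'.length * listChain B C f' w z) := by
            rw [hsplit, sprod_append, ← hw]
            exact mul_le_mul hCrun hf'bound (sprod_nonneg
              (fun i j => mul_nonneg (by simpa using hθinn) (hB i j)) hC _ _)
              (mtPow_nonneg hC _ _ _)
          simp only [sprod_cons, Matrix.of_apply, if_pos]
          calc θ⁻¹ * B a u * sprod (Matrix.of fun i j => θ⁻¹ * B i j) C u t'
              ≤ θ⁻¹ * B a u * (mtPow C run.length u w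
                  * (θ⁻¹ ^ f'.length * listChain B C f' w z)) :=
                mul_le_mul_of_nonneg_left hrest (mul_nonneg hθinn (hB a u))
          _ = θ⁻¹ ^ (f'.length + 1) * (B a u * mtPow C run.length u w
                * listChain B C f' w z) := by ring
          _ ≤ θ⁻¹ ^ (f'.length + 1) * listChain B C (run.length :: f') a z :=
                mul_le_mul_of_nonneg_left hchain (by positivity)
          _ = θ⁻¹ ^ (run.length :: f').length * listChain B C (run.length :: f') a z := by
                simp

end

section
variable {S B : Matrix (Fin n) (Fin n) ℝ}

lemma fcsup_exists {ι : Type*} [Finite ι] [Nonempty ι] (f : ι → ℝ) : ∃ j, (⨆ i, f i) = f j := by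
  obtain ⟨j, hj⟩ := Finite.exists_max f
  exact ⟨j, le_antisymm (ciSup_le hj) (le_ciSup (Set.finite_range f).bddAbove j)⟩

lemma fle_csup {ι : Type*} [Finite ι] (f : ι → ℝ) (j : ι) : f j ≤ ⨆ i, f i :=
  le_ciSup (Set.finite_range f).bddAbove j

/-- A path product written as a product over `Fin`-indexed edges. -/
lemma pprod_eq_prod (S : Matrix (Fin n) (Fin n) ℝ) (a : Fin n) (s : List (Fin n)) :
    pprod S a s = ∏ t : Fin s.length,
      S ((a :: s).get t.castSucc) ((a :: s).get t.succ) := by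
  induction s generalizing a with
  | nil => simp
  | cons v s ih =>
      rw [pprod_cons, ih v]
      simp only [List.length_cons]
      rw [Fin.prod_univ_succ]
      congr 1

lemma lastP_eq_get (a : Fin n) (s : List (Fin n)) :
    lastP a s = (a :: s).get (Fin.last s.length) := by
  rw [lastP, List.getLast_eq_getElem]
  rfl

/-- A cycle product written in the `mtSpecRad` form. -/
lemma pprod_cycle_eq (S : Matrix (Fin n) (Fin n) ℝ) (a : Fin n) (s : List (Fin n))
    (hk : 0 < s.length) (hc : lastP a s = a) :
    pprod S a s = ∏ t : Fin s.length,
      S ((a :: s).get t.castSucc)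
        ((a :: s).get (Fin.castSucc ⟨((t : ℕ) + 1) % s.length, Nat.mod_lt _ hk⟩)) := by
  rw [pprod_eq_prod]
  apply Finset.prod_congr rfl
  intro t _
  congr 1
  rcases Nat.lt_or_ge ((t : ℕ) + 1) s.length with h | h
  · congr 1
    apply Fin.ext
    simp [Nat.mod_eq_of_lt h]
  · have ht : (t : ℕ) + 1 = s.length := by omega
    have h0 : ((t : ℕ) + 1) % s.length = 0 := by rw [ht, Nat.mod_self]
    have h1 : t.succ = Fin.last s.length := by apply Fin.ext; simp [ht]
    have h2 : (⟨((t : ℕ) + 1) % s.length, Nat.mod_lt _ hk⟩ : Fin s.length) = ⟨0, hk⟩ :=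
      Fin.ext (by simp [h0])
    rw [h1, ← lastP_eq_get, hc, h2]
    rfl

/-- Telescoping product of ratios around a cycle. -/
lemma telescope {k : ℕ} (hk : 0 < k) (f : Fin k → Fin n) (x : Fin n → ℝ)
    (hx : ∀ i, 0 < x i) :
    ∏ t : Fin k, (x (f t) / x (f ⟨((t : ℕ) + 1) % k, Nat.mod_lt _ hk⟩)) = 1 := by
  obtain ⟨m, rfl⟩ : ∃ m, k = m + 1 := ⟨k - 1, by omega⟩
  have hrot : ∀ t : Fin (m + 1),
      (⟨((t : ℕ) + 1) % (m + 1), Nat.mod_lt _ hk⟩ : Fin (m + 1)) = finRotate (m + 1) t := by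
    intro t
    rw [finRotate_succ_apply]
    apply Fin.ext
    simp [Fin.add_def, Fin.val_one', Nat.add_mod]
  rw [Finset.prod_div_distrib]
  have : ∏ t : Fin (m+1), x (f ⟨((t : ℕ) + 1) % (m + 1), Nat.mod_lt _ hk⟩)
      = ∏ t : Fin (m+1), x (f t) := by
    rw [Finset.prod_congr rfl (fun t _ => by rw [hrot t])]
    exact Equiv.prod_comp (finRotate (m + 1)) (fun t => x (f t))
  rw [this, div_self (Finset.prod_pos (fun t _ => hx (f t))).ne']

lemma bddAbove_specSet (hB : ∀ i j, 0 ≤ B i j) :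
    BddAbove { r : ℝ | ∃ (k : ℕ) (hk : 0 < k), k ≤ n ∧ ∃ f : Fin k → Fin n,
      r = (∏ t : Fin k, B (f t) (f ⟨((t : ℕ) + 1) % k, Nat.mod_lt _ hk⟩)) ^ ((k : ℝ)⁻¹) } := by
  classical
  by_cases hn : n = 0
  · subst hn
    refine ⟨1, ?_⟩
    rintro r ⟨k, hk, hkn, f, rfl⟩
    omega
  haveI : NeZero n := ⟨hn⟩
  set KB : ℝ := 1 ⊔ ⨆ p : Fin n × Fin n, B p.1 p.2 with hKB
  have hKB1 : 1 ≤ KB := le_max_left _ _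
  have hKBb : ∀ i j, B i j ≤ KB := fun i j =>
    le_trans (fle_csup (fun p : Fin n × Fin n => B p.1 p.2) (i, j)) (le_max_right _ _)
  refine ⟨KB, ?_⟩
  rintro r ⟨k, hk, hkn, f, rfl⟩
  have hprod : (∏ t : Fin k, B (f t) (f ⟨((t : ℕ) + 1) % k, Nat.mod_lt _ hk⟩)) ≤ KB ^ k := by
    calc (∏ t : Fin k, B (f t) (f ⟨((t : ℕ) + 1) % k, Nat.mod_lt _ hk⟩))
        ≤ ∏ _t : Fin k, KB :=
          Finset.prod_le_prod (fun t _ => hB _ _) (fun t _ => hKBb _ _)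
    _ = KB ^ k := by simp
  have hpn : (0:ℝ) ≤ ∏ t : Fin k, B (f t) (f ⟨((t : ℕ) + 1) % k, Nat.mod_lt _ hk⟩) :=
    Finset.prod_nonneg (fun t _ => hB _ _)
  calc (∏ t : Fin k, B (f t) (f ⟨((t : ℕ) + 1) % k, Nat.mod_lt _ hk⟩)) ^ ((k : ℝ)⁻¹)
      ≤ (KB ^ k) ^ ((k : ℝ)⁻¹) := Real.rpow_le_rpow hpn hprod (by positivity)
  _ = KB := Real.pow_rpow_inv_natCast (by linarith) hk.ne'

lemma diag_le_specRad [NeZero n] (hB : ∀ i j, 0 ≤ B i j) (i : Fin n) :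
    B i i ≤ mtSpecRad B := by
  have hpos : 0 < n := Nat.pos_of_ne_zero (NeZero.ne n)
  have hmem : B i i ∈ { r : ℝ | ∃ (k : ℕ) (hk : 0 < k), k ≤ n ∧ ∃ f : Fin k → Fin n,
      r = (∏ t : Fin k, B (f t) (f ⟨((t : ℕ) + 1) % k, Nat.mod_lt _ hk⟩)) ^ ((k : ℝ)⁻¹) } := by
    refine ⟨1, one_pos, hpos, fun _ => i, ?_⟩
    simp
  exact le_csSup (bddAbove_specSet hB) hmem

lemma specRad_nonneg [NeZero n] (hB : ∀ i j, 0 ≤ B i j) : 0 ≤ mtSpecRad B :=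
  le_trans (hB (Classical.arbitrary _) _) (diag_le_specRad hB _)

/-- Any cycle product of `B` of length at most `n` is bounded by `mtSpecRad B ^ length`. -/
lemma cycle_le_specRad_pow [NeZero n] (hB : ∀ i j, 0 ≤ B i j) (a : Fin n) (s : List (Fin n))
    (hk : 0 < s.length) (hkn : s.length ≤ n) (hc : lastP a s = a) :
    pprod B a s ≤ mtSpecRad B ^ s.length := by
  set k := s.length with hkdef
  set f : Fin k → Fin n := fun t => (a :: s).get t.castSucc with hf
  set p : ℝ := ∏ t : Fin k, B (f t) (f ⟨((t : ℕ) + 1) % k, Nat.mod_lt _ hk⟩) with hp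
  have heq : pprod B a s = p := pprod_cycle_eq B a s hk hc
  have hpn : 0 ≤ p := Finset.prod_nonneg (fun t _ => hB _ _)
  have hmem : p ^ ((k : ℝ)⁻¹) ∈ { r : ℝ | ∃ (k : ℕ) (hk : 0 < k), k ≤ n ∧ ∃ f : Fin k → Fin n,
      r = (∏ t : Fin k, B (f t) (f ⟨((t : ℕ) + 1) % k, Nat.mod_lt _ hk⟩)) ^ ((k : ℝ)⁻¹) } :=
    ⟨k, hk, hkn, f, rfl⟩
  have hr : p ^ ((k : ℝ)⁻¹) ≤ mtSpecRad B := le_csSup (bddAbove_specSet hB) hmem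
  have hrn : 0 ≤ p ^ ((k : ℝ)⁻¹) := Real.rpow_nonneg hpn _
  calc pprod B a s = p := heq
  _ = (p ^ ((k : ℝ)⁻¹)) ^ k := (Real.rpow_inv_natCast_pow hpn hk.ne').symm
  _ ≤ mtSpecRad B ^ k := pow_le_pow_left₀ hrn hr k

/-- If every edge of `B` is bounded by `ρ x i / x j`, then `mtSpecRad B ≤ ρ`. -/
lemma specRad_le [NeZero n] (hB : ∀ i j, 0 ≤ B i j) {ρ : ℝ} {x : Fin n → ℝ}
    (hx : ∀ i, 0 < x i) (hρ : 0 ≤ ρ) (hedge : ∀ i j, B i j * x j ≤ ρ * x i) :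
    mtSpecRad B ≤ ρ := by
  apply Real.sSup_le _ hρ
  rintro r ⟨k, hk, hkn, f, rfl⟩
  have hple : (∏ t : Fin k, B (f t) (f ⟨((t : ℕ) + 1) % k, Nat.mod_lt _ hk⟩)) ≤ ρ ^ k := by
    calc (∏ t : Fin k, B (f t) (f ⟨((t : ℕ) + 1) % k, Nat.mod_lt _ hk⟩))
        ≤ ∏ t : Fin k, ρ * (x (f t) / x (f ⟨((t : ℕ) + 1) % k, Nat.mod_lt _ hk⟩)) := by
          refine Finset.prod_le_prod (fun t _ => hB _ _) (fun t _ => ?_)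
          rw [mul_div_assoc']
          rw [le_div_iff₀ (hx _)]
          exact hedge _ _
    _ = ρ ^ k * ∏ t : Fin k, (x (f t) / x (f ⟨((t : ℕ) + 1) % k, Nat.mod_lt _ hk⟩)) := by
          rw [Finset.prod_mul_distrib]; simp
    _ = ρ ^ k := by rw [telescope hk f x hx, mul_one]
  have hpn : (0:ℝ) ≤ ∏ t : Fin k, B (f t) (f ⟨((t : ℕ) + 1) % k, Nat.mod_lt _ hk⟩) :=
    Finset.prod_nonneg (fun t _ => hB _ _)
  calc (∏ t : Fin k, B (f t) (f ⟨((t : ℕ) + 1) % k, Nat.mod_lt _ hk⟩)) ^ ((k : ℝ)⁻¹)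
      ≤ (ρ ^ k) ^ ((k : ℝ)⁻¹) := Real.rpow_le_rpow hpn hple (by positivity)
  _ = ρ := Real.pow_rpow_inv_natCast hρ hk.ne'

lemma mtMul_entry_le [NeZero n] {X Y : Matrix (Fin n) (Fin n) ℝ} {P Q : ℝ}
    (hX : ∀ i j, 0 ≤ X i j) (hY : ∀ i j, 0 ≤ Y i j)
    (hXP : ∀ i j, X i j ≤ P) (hYQ : ∀ i j, Y i j ≤ Q) (i j : Fin n) :
    mtMul X Y i j ≤ P * Q := by
  refine mtMul_le (fun l => ?_)
  exact mul_le_mul (hXP i l) (hYQ l j) (hY l j) (le_trans (hX i l) (hXP i l))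

lemma mtPow_entry_le [NeZero n] {C : Matrix (Fin n) (Fin n) ℝ} {K : ℝ}
    (hC : ∀ i j, 0 ≤ C i j) (hKC : ∀ i j, C i j ≤ K) (h1 : 1 ≤ K) (m : ℕ) :
    ∀ i j, mtPow C m i j ≤ K ^ m := by
  induction m with
  | zero =>
      intro i j
      simp only [mtPow, Matrix.of_apply, pow_zero]
      split <;> norm_num
  | succ m ih =>
      intro i j
      rw [pow_succ]
      exact mtMul_entry_le (mtPow_nonneg hC m) hC ih hKC i j

lemma listChain_entry_le [NeZero n] {B C : Matrix (Fin n) (Fin n) ℝ} {K : ℝ}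
    (hB : ∀ i j, 0 ≤ B i j) (hC : ∀ i j, 0 ≤ C i j)
    (hKB : ∀ i j, B i j ≤ K) (hKC : ∀ i j, C i j ≤ K) (h1 : 1 ≤ K) (f : List ℕ) :
    ∀ i j, listChain B C f i j ≤ K ^ (f.length + f.sum) := by
  induction f with
  | nil =>
      intro i j
      show mtPow B 0 i j ≤ _
      simp only [mtPow, Matrix.of_apply, List.length_nil, List.sum_nil, pow_zero]
      split <;> norm_num
  | cons q f ih =>
      intro i j
      have h2 : ∀ i j, mtMul B (mtPow C q) i j ≤ K ^ (q + 1) := by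
        intro i j
        rw [pow_succ']
        exact mtMul_entry_le hB (mtPow_nonneg hC q) hKB (mtPow_entry_le hC hKC h1 q) i j
      have h3 := mtMul_entry_le (mtMul_nonneg hB (mtPow_nonneg hC q))
        (listChain_nonneg hB hC f) h2 ih i j
      calc listChain B C (q :: f) i j ≤ K ^ (q + 1) * K ^ (f.length + f.sum) := h3
      _ = K ^ ((q :: f).length + (q :: f).sum) := by
            rw [← pow_add, List.length_cons, List.sum_cons]; ring_nf
  
lemma bddAbove_chainSet [NeZero n] {B C : Matrix (Fin n) (Fin n) ℝ}
    (hB : ∀ i j, 0 ≤ B i j) (hC : ∀ i j, 0 ≤ C i j) :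
    BddAbove { r : ℝ | ∃ k : ℕ, 0 < k ∧ k ≤ n - 1 ∧ ∃ f : Fin k → ℕ,
      1 ≤ ∑ t, f t ∧ (∑ t, f t) ≤ n - k ∧
      r = (⨆ i, mtChain B C k f i i) ^ ((k : ℝ)⁻¹) } := by
  classical
  set K : ℝ := 1 ⊔ (⨆ p : Fin n × Fin n, B p.1 p.2) ⊔ (⨆ p : Fin n × Fin n, C p.1 p.2)
    with hK
  have h1 : 1 ≤ K := le_trans (le_max_left _ _) (le_max_left _ _)
  have hKB : ∀ i j, B i j ≤ K := fun i j => le_trans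
    (le_trans (fle_csup (fun p : Fin n × Fin n => B p.1 p.2) (i, j)) (le_max_right _ _))
    (le_max_left _ _)
  have hKC : ∀ i j, C i j ≤ K := fun i j =>
    le_trans (fle_csup (fun p : Fin n × Fin n => C p.1 p.2) (i, j)) (le_max_right _ _)
  refine ⟨K ^ n, ?_⟩
  rintro r ⟨k, hk, hkn, f, hf1, hfn, rfl⟩
  have hkln : k ≤ n := le_trans hkn (Nat.sub_le _ _)
  have hsup : (⨆ i, mtChain B C k f i i) ≤ K ^ n := by
    refine csup_le (fun i => ?_)
    rw [mtChain_eq_listChain]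
    have := listChain_entry_le hB hC hKB hKC h1 (List.ofFn f) i i
    refine le_trans this ?_
    have hexp : (List.ofFn f).length + (List.ofFn f).sum ≤ n := by
      rw [List.length_ofFn, List.sum_ofFn]
      omega
    exact pow_le_pow_right₀ (by linarith) hexp
  have hsupnn : 0 ≤ ⨆ i, mtChain B C k f i i := by
    refine csup_nonneg (fun i => ?_)
    rw [mtChain_eq_listChain]
    exact listChain_nonneg hB hC _ i i
  calc (⨆ i, mtChain B C k f i i) ^ ((k : ℝ)⁻¹)
      ≤ (K ^ n) ^ ((k : ℝ)⁻¹) := Real.rpow_le_rpow hsupnn hsup (by positivity)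
  _ ≤ (K ^ n) ^ (1 : ℝ) := by
      refine Real.rpow_le_rpow_of_exponent_le (one_le_pow₀ h1) ?_
      rw [show (1:ℝ) = ((1:ℕ):ℝ)⁻¹ by norm_num]
      apply inv_anti₀ (by norm_num)
      exact_mod_cast hk
  _ = K ^ n := Real.rpow_one _

end
end MtAux

namespace MtAux
variable {n : ℕ}

lemma countP_true_add_false {α : Type*} (p : α → Bool) (l : List α) :
    l.countP p + l.countP (fun a => !p a) = l.length := by
  induction l with
  | nil => simp
  | cons x l ih =>
      simp only [List.countP_cons, List.length_cons]
      cases hx : p x <;> simp [hx] <;> omega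

lemma exists_first_true {t : List (Bool × Fin n)} (h : ∃ e ∈ t, e.1 = true) :
    ∃ (t0 : List (Bool × Fin n)) (u : Fin n) (t1 : List (Bool × Fin n)),
      t = t0 ++ (true, u) :: t1 ∧ ∀ e ∈ t0, e.1 = false := by
  induction t with
  | nil => simp at h
  | cons e t ih =>
      rcases he : e.1 with _ | _
      · have h' : ∃ e' ∈ t, e'.1 = true := by
          obtain ⟨e', he't, he'⟩ := h
          rcases List.mem_cons.mp he't with rfl | hmem
          · rw [he] at he'; exact absurd he' (by simp)
          · exact ⟨e', hmem, he'⟩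
        obtain ⟨t0, u, t1, heq, ht0⟩ := ih h'
        refine ⟨e :: t0, u, t1, by rw [heq]; rfl, ?_⟩
        intro e' he'
        rcases List.mem_cons.mp he' with rfl | hmem
        · exact he
        · exact ht0 e' hmem
      · refine ⟨[], e.2, t, ?_, by simp⟩
        have h2 : e = (true, e.2) := by
          rcases e with ⟨b, v⟩; simp only at he; rw [he]
        rw [← h2]; rfl

end MtAux


/-- A positive vector `x` satisfies `C ⊗ x ≤ x` and `ρ(A, x) = θ`
(i.e. is a minimizer of the constrained problem) iff `x = D^* ⊗ u` for some positive
`u`, where `D_{ij} = max(θ⁻¹ B_{ij}, C_{ij})`, `B_{ij} = max(A_{ij}, (A_{ji})⁻)`. -/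
theorem mt_rho_constrained_minimizers {n : ℕ} (hn : 1 ≤ n) (A : Matrix (Fin n) (Fin n) ℝ)
    (hA : ∀ i j, 0 ≤ A i j) (hAA : ∀ i j, 0 < A i j ∨ 0 < A j i)
    (B : Matrix (Fin n) (Fin n) ℝ) (hB : ∀ i j, B i j = max (A i j) (A j i)⁻¹)
    (μ : ℝ) (hμ : μ = mtSpecRad B)
    (C : Matrix (Fin n) (Fin n) ℝ) (hC : ∀ i j, 0 ≤ C i j)
    (hTr : ∀ k : ℕ, 1 ≤ k → k ≤ n → ∀ i, mtPow C k i i ≤ 1)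
    (θ : ℝ) (hθ : θ = mtTheta B C)
    (D : Matrix (Fin n) (Fin n) ℝ) (hD : ∀ i j, D i j = max (θ⁻¹ * B i j) (C i j))
    (x : Fin n → ℝ) (hx : ∀ i, 0 < x i) :
    ((∀ i, (⨆ j, C i j * x j) ≤ x i) ∧ mtRho A x = θ) ↔
      ∃ u : Fin n → ℝ, (∀ i, 0 < u i) ∧ x = mtVecMul (mtStar D) u := by
  haveI : NeZero n := ⟨by omega⟩
  classical
  set chainSet := { r : ℝ | ∃ k : ℕ, 0 < k ∧ k ≤ n - 1 ∧ ∃ f : Fin k → ℕ,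
      1 ≤ ∑ t, f t ∧ (∑ t, f t) ≤ n - k ∧
      r = (⨆ i, mtChain B C k f i i) ^ ((k : ℝ)⁻¹) } with hCSdef
  have hθeq : θ = max μ (sSup chainSet) := by rw [hθ, hμ]; rfl
  have hBnn : ∀ i j, 0 ≤ B i j := fun i j => by
    rw [hB i j]; exact le_trans (hA i j) (le_max_left _ _)
  have hμ1 : 1 ≤ μ := by
    obtain ⟨i⟩ : Nonempty (Fin n) := inferInstance
    have hAii : 0 < A i i := by rcases hAA i i with h | h <;> exact h
    have h1 : 1 ≤ B i i := by
      rw [hB i i]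
      rcases le_total 1 (A i i) with h | h
      · exact le_max_of_le_left h
      · refine le_max_of_le_right ?_
        have h2 : A i i * (A i i)⁻¹ = 1 := mul_inv_cancel₀ hAii.ne'
        nlinarith [inv_pos.mpr hAii]
    exact le_trans h1 (hμ ▸ MtAux.diag_le_specRad hBnn i)
  have hθμ : μ ≤ θ := hθeq ▸ le_max_left _ _
  have hθ1 : 1 ≤ θ := le_trans hμ1 hθμ
  have hθpos : (0:ℝ) < θ := lt_of_lt_of_le one_pos hθ1
  have hDnn : ∀ i j, 0 ≤ D i j := fun i j => by
    rw [hD i j]; exact le_trans (hC i j) (le_max_right _ _)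
  have hθinvBD : ∀ i j, θ⁻¹ * B i j ≤ D i j := fun i j => by
    rw [hD i j]; exact le_max_left _ _
  have hCD : ∀ i j, C i j ≤ D i j := fun i j => by
    rw [hD i j]; exact le_max_right _ _
  have hrho_eq : mtRho A x = max (⨆ p : Fin n × Fin n, A p.1 p.2 * x p.2 / x p.1)
      (sSup {r : ℝ | ∃ i j, 0 < A i j ∧ r = x i / (A i j * x j)}) := rfl
  have hbdd2 : BddAbove {r : ℝ | ∃ i j, 0 < A i j ∧ r = x i / (A i j * x j)} := by
    refine ((Set.finite_range (fun p : Fin n × Fin n => x p.1 / (A p.1 p.2 * x p.2))).subset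
      ?_).bddAbove
    rintro r ⟨i, j, _, rfl⟩
    exact ⟨(i, j), rfl⟩
  have hrho0 : 0 ≤ mtRho A x := by
    rw [hrho_eq]
    refine le_trans ?_ (le_max_left _ _)
    obtain ⟨i0⟩ : Nonempty (Fin n) := inferInstance
    refine le_trans ?_ (MtAux.fle_csup (fun p : Fin n × Fin n => A p.1 p.2 * x p.2 / x p.1)
      (i0, i0))
    exact div_nonneg (mul_nonneg (hA _ _) (hx _).le) (hx _).le
  have hBle : ∀ i j, B i j * x j ≤ mtRho A x * x i := by
    intro i j
    rw [hB i j, max_mul_of_nonneg _ _ (hx j).le]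
    apply max_le
    · have h1 : A i j * x j / x i ≤ mtRho A x := by
        refine le_trans (MtAux.fle_csup (fun p : Fin n × Fin n => A p.1 p.2 * x p.2 / x p.1)
          (i, j)) ?_
        rw [hrho_eq]; exact le_max_left _ _
      exact (div_le_iff₀ (hx i)).mp h1
    · by_cases hji : 0 < A j i
      · have hmem : x j / (A j i * x i) ∈
            {r : ℝ | ∃ i' j', 0 < A i' j' ∧ r = x i' / (A i' j' * x j')} := ⟨j, i, hji, rfl⟩
        have h2 : x j / (A j i * x i) ≤ mtRho A x := by
          refine le_trans (le_csSup hbdd2 hmem) ?_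
          rw [hrho_eq]; exact le_max_right _ _
        have h3 : x j ≤ mtRho A x * (A j i * x i) :=
          (div_le_iff₀ (mul_pos hji (hx i))).mp h2
        calc (A j i)⁻¹ * x j ≤ (A j i)⁻¹ * (mtRho A x * (A j i * x i)) :=
              mul_le_mul_of_nonneg_left h3 (by positivity)
        _ = mtRho A x * x i := by field_simp
      · have hz : A j i = 0 := le_antisymm (not_lt.mp hji) (hA j i)
        rw [hz, inv_zero, zero_mul]
        exact mul_nonneg hrho0 (hx i).le
  have hLB : (∀ i, (⨆ j, C i j * x j) ≤ x i) → θ ≤ mtRho A x := by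
    intro hfeas
    have hCx : ∀ i j, C i j * x j ≤ x i := fun i j =>
      le_trans (MtAux.le_csup (fun j => C i j * x j) j) (hfeas i)
    have hCpow : ∀ (m : ℕ) i j, mtPow C m i j * x j ≤ x i := by
      intro m
      induction m with
      | zero =>
          intro i j
          show (Matrix.of fun i j => if i = j then (1:ℝ) else 0) i j * x j ≤ x i
          simp only [Matrix.of_apply]
          split
          · next h => subst h; simp
          · rw [zero_mul]; exact (hx i).le
      | succ m ih =>
          intro i j
          show mtMul (mtPow C m) C i j * x j ≤ x i
          obtain ⟨l, hl⟩ := MtAux.csup_exists (fun l => mtPow C m i l * C l j)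
          rw [MtAux.mtMul_entry, hl]
          calc mtPow C m i l * C l j * x j = mtPow C m i l * (C l j * x j) := mul_assoc _ _ _
          _ ≤ mtPow C m i l * x l :=
              mul_le_mul_of_nonneg_left (hCx l j) (MtAux.mtPow_nonneg hC m i l)
          _ ≤ x i := ih i l
    have hchainUB : ∀ (k : ℕ) (f : Fin k → ℕ) (i j : Fin n),
        mtChain B C k f i j * x j ≤ mtRho A x ^ k * x i := by
      intro k
      induction k with
      | zero =>
          intro f i j
          show (Matrix.of fun i j => if i = j then (1:ℝ) else 0) i j * x j ≤ _
          simp only [Matrix.of_apply, pow_zero, one_mul]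
          split
          · next h => subst h; simp
          · rw [zero_mul]; exact (hx i).le
      | succ k ih =>
          intro f i j
          show mtMul (mtMul B (mtPow C (f 0))) (mtChain B C k fun t => f t.succ) i j * x j ≤ _
          obtain ⟨l, hl⟩ := MtAux.csup_exists
            (fun l => mtMul B (mtPow C (f 0)) i l * mtChain B C k (fun t => f t.succ) l j)
          rw [MtAux.mtMul_entry, hl]
          obtain ⟨w, hw⟩ := MtAux.csup_exists (fun w => B i w * mtPow C (f 0) w l)
          rw [MtAux.mtMul_entry, hw]
          calc B i w * mtPow C (f 0) w l * mtChain B C k (fun t => f t.succ) l j * x j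
              = B i w * mtPow C (f 0) w l * (mtChain B C k (fun t => f t.succ) l j * x j) := by
                ring
          _ ≤ B i w * mtPow C (f 0) w l * (mtRho A x ^ k * x l) :=
              mul_le_mul_of_nonneg_left (ih _ l j)
                (mul_nonneg (hBnn i w) (MtAux.mtPow_nonneg hC _ w l))
          _ = mtRho A x ^ k * (B i w * (mtPow C (f 0) w l * x l)) := by ring
          _ ≤ mtRho A x ^ k * (B i w * x w) :=
              mul_le_mul_of_nonneg_left
                (mul_le_mul_of_nonneg_left (hCpow _ w l) (hBnn i w)) (pow_nonneg hrho0 k)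
          _ ≤ mtRho A x ^ k * (mtRho A x * x i) :=
              mul_le_mul_of_nonneg_left (hBle i w) (pow_nonneg hrho0 k)
          _ = mtRho A x ^ (k + 1) * x i := by ring
    rw [hθeq]
    apply max_le
    · rw [hμ]; exact MtAux.specRad_le hBnn hx hrho0 hBle
    · refine Real.sSup_le ?_ hrho0
      rintro r ⟨k, hk, hkn, f, hf1, hfn, rfl⟩
      have hsup0 : 0 ≤ ⨆ i, mtChain B C k f i i :=
        MtAux.csup_nonneg (fun i => by
          rw [MtAux.mtChain_eq_listChain]; exact MtAux.listChain_nonneg hBnn hC _ _ _)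
      have hsuple : (⨆ i, mtChain B C k f i i) ≤ mtRho A x ^ k :=
        MtAux.csup_le (fun i => le_of_mul_le_mul_right (hchainUB k f i i) (hx i))
      calc (⨆ i, mtChain B C k f i i) ^ ((k:ℝ)⁻¹)
          ≤ (mtRho A x ^ k) ^ ((k:ℝ)⁻¹) := Real.rpow_le_rpow hsup0 hsuple (by positivity)
      _ = mtRho A x := Real.pow_rpow_inv_natCast hrho0 hk.ne'
  have hDeq : D = Matrix.of fun i j =>
      max ((Matrix.of fun i j => θ⁻¹ * B i j) i j) (C i j) := by
    funext i j; simp only [Matrix.of_apply]; rw [hD i j]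
  have hDcyc : ∀ a s, MtAux.lastP a s = a → MtAux.pprod D a s ≤ 1 := by
    refine MtAux.cycle_all hDnn ?_
    intro a s hslen hsc
    rcases Nat.eq_zero_or_pos s.length with h0 | hspos
    · rw [List.length_eq_zero_iff.mp h0]; simp
    obtain ⟨t, hmap, hpe⟩ :=
      MtAux.exists_sel (P := Matrix.of fun i j => θ⁻¹ * B i j) (Q := C) a s
    rw [hDeq, hpe]
    have htlen : t.length = s.length := by rw [← hmap]; simp
    have hcyc_t : MtAux.lastS a t = a := by rw [MtAux.lastS, hmap]; exact hsc
    by_cases hallf : ∀ e ∈ t, e.1 = false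
    · rw [MtAux.sprod_all_false hallf, hmap]
      have h1 := MtAux.pprod_le_mtPow hC a s
      rw [hsc] at h1
      exact le_trans h1 (hTr s.length hspos hslen a)
    · push_neg at hallf
      obtain ⟨e0, he0t, he0⟩ := hallf
      have he0' : e0.1 = true := by simpa using he0
      by_cases hallt : ∀ e ∈ t, e.1 = true
      · rw [MtAux.sprod_all_true hallt, hmap, MtAux.pprod_scale]
        have hcy := MtAux.cycle_le_specRad_pow hBnn a s hspos hslen hsc
        rw [← hμ] at hcy
        have hμθ : θ⁻¹ * μ ≤ 1 := by
          have h2 : θ⁻¹ * μ ≤ θ⁻¹ * θ := mul_le_mul_of_nonneg_left hθμ (by positivity)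
          rwa [inv_mul_cancel₀ hθpos.ne'] at h2
        calc θ⁻¹ ^ s.length * MtAux.pprod B a s
            ≤ θ⁻¹ ^ s.length * μ ^ s.length := mul_le_mul_of_nonneg_left hcy (by positivity)
        _ = (θ⁻¹ * μ) ^ s.length := by rw [mul_pow]
        _ ≤ 1 := pow_le_one₀ (mul_nonneg (by positivity) (by linarith)) hμθ
      · push_neg at hallt
        obtain ⟨e1, he1t, he1⟩ := hallt
        have he1' : e1.1 = false := by simpa using he1
        obtain ⟨t0, u0, t1, hteq, ht0f⟩ := MtAux.exists_first_true ⟨e0, he0t, he0'⟩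
        set xn := MtAux.lastS a t0 with hxn
        have hlastt1 : MtAux.lastS u0 t1 = a := by
          have h3 := hcyc_t
          rw [hteq, MtAux.lastS_append] at h3
          simpa using h3
        have hrot : MtAux.sprod (Matrix.of fun i j => θ⁻¹ * B i j) C a t
            = MtAux.sprod (Matrix.of fun i j => θ⁻¹ * B i j) C xn
                ((true, u0) :: (t1 ++ t0)) := by
          rw [hteq, MtAux.sprod_append a t0 ((true, u0) :: t1), MtAux.sprod_cons,
            MtAux.sprod_cons, MtAux.sprod_append u0 t1 t0, hlastt1]
          ring
        obtain ⟨f, hfpos, hftrue, hffalse, hfb⟩ :=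
          MtAux.parse hBnn hC hθpos ((true, u0) :: (t1 ++ t0)).length
            ((true, u0) :: (t1 ++ t0)) xn u0 (t1 ++ t0) le_rfl rfl
        have hlast'' : MtAux.lastS xn ((true, u0) :: (t1 ++ t0)) = xn := by
          rw [MtAux.lastS_cons]
          show MtAux.lastS u0 (t1 ++ t0) = xn
          rw [MtAux.lastS_append, hlastt1]
        rw [hlast''] at hfb
        have hct : List.countP (fun e : Bool × Fin n => e.1) ((true, u0) :: (t1 ++ t0))
            = List.countP (fun e : Bool × Fin n => e.1) t := by
          rw [hteq]; simp only [List.countP_cons, List.countP_append]; omega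
        have hcf : List.countP (fun e : Bool × Fin n => !e.1) ((true, u0) :: (t1 ++ t0))
            = List.countP (fun e : Bool × Fin n => !e.1) t := by
          rw [hteq]; simp only [List.countP_cons, List.countP_append]; omega
        have hsumlen : List.countP (fun e : Bool × Fin n => e.1) t
            + List.countP (fun e : Bool × Fin n => !e.1) t = t.length :=
          MtAux.countP_true_add_false _ t
        have hfsum1 : 1 ≤ f.sum := by
          rw [hffalse, hcf]
          have h4 : 0 < List.countP (fun e : Bool × Fin n => !e.1) t :=
            List.countP_pos_iff.mpr ⟨e1, he1t, by simp [he1']⟩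
          omega
        have hflen : f.length + f.sum = t.length := by
          rw [hftrue, hffalse, hct, hcf]; exact hsumlen
        have hkn1 : f.length ≤ n - 1 := by
          have h5 := htlen ▸ hflen
          omega
        have hkn2 : f.sum ≤ n - f.length := by
          have h5 := htlen ▸ hflen
          omega
        have hsumget : (∑ tt, f.get tt) = f.sum := by
          conv_rhs => rw [← List.ofFn_get f]
          rw [List.sum_ofFn]
        have hchainmem : (⨆ i, mtChain B C f.length f.get i i) ^ ((f.length : ℝ)⁻¹)
            ∈ chainSet :=
          ⟨f.length, hfpos, hkn1, f.get, by rw [hsumget]; exact hfsum1,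
            by rw [hsumget]; exact hkn2, rfl⟩
        have hr_le : (⨆ i, mtChain B C f.length f.get i i) ^ ((f.length : ℝ)⁻¹) ≤ θ :=
          le_trans (le_csSup (MtAux.bddAbove_chainSet hBnn hC) hchainmem)
            (hθeq ▸ le_max_right _ _)
        have hsup0 : 0 ≤ ⨆ i, mtChain B C f.length f.get i i :=
          MtAux.csup_nonneg (fun i => by
            rw [MtAux.mtChain_eq_listChain]; exact MtAux.listChain_nonneg hBnn hC _ _ _)
        have hchainval : MtAux.listChain B C f xn xn ≤ θ ^ f.length := by
          have h1 : MtAux.listChain B C f xn xn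
              ≤ ⨆ i, mtChain B C f.length f.get i i := by
            have hMC : mtChain B C f.length f.get = MtAux.listChain B C f := by
              rw [MtAux.mtChain_eq_listChain, List.ofFn_get]
            rw [hMC]
            exact MtAux.fle_csup (fun i => MtAux.listChain B C f i i) xn
          calc MtAux.listChain B C f xn xn ≤ ⨆ i, mtChain B C f.length f.get i i := h1
          _ = ((⨆ i, mtChain B C f.length f.get i i) ^ ((f.length : ℝ)⁻¹)) ^ f.length :=
              (Real.rpow_inv_natCast_pow hsup0 hfpos.ne').symm
          _ ≤ θ ^ f.length := pow_le_pow_left₀ (Real.rpow_nonneg hsup0 _) hr_le _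
        rw [hrot]
        calc MtAux.sprod (Matrix.of fun i j => θ⁻¹ * B i j) C xn ((true, u0) :: (t1 ++ t0))
            ≤ θ⁻¹ ^ f.length * MtAux.listChain B C f xn xn := hfb
        _ ≤ θ⁻¹ ^ f.length * θ ^ f.length :=
            mul_le_mul_of_nonneg_left hchainval (by positivity)
        _ = 1 := by rw [← mul_pow, inv_mul_cancel₀ hθpos.ne', one_pow]
  constructor
  · rintro ⟨hfeas, hrhoeq⟩
    have hBx : ∀ i j, B i j * x j ≤ θ * x i := fun i j => by
      rw [← hrhoeq]; exact hBle i j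
    have hCx : ∀ i j, C i j * x j ≤ x i := fun i j =>
      le_trans (MtAux.le_csup (fun j => C i j * x j) j) (hfeas i)
    have hDx : ∀ i j, D i j * x j ≤ x i := by
      intro i j
      rw [hD i j, max_mul_of_nonneg _ _ (hx j).le]
      apply max_le
      · have h1 : θ⁻¹ * (B i j * x j) ≤ θ⁻¹ * (θ * x i) :=
          mul_le_mul_of_nonneg_left (hBx i j) (by positivity)
        calc θ⁻¹ * B i j * x j = θ⁻¹ * (B i j * x j) := mul_assoc _ _ _
        _ ≤ θ⁻¹ * (θ * x i) := h1
        _ = x i := by field_simp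
      · exact hCx i j
    have hPx : ∀ (k : ℕ) i j, mtPow D k i j * x j ≤ x i := by
      intro k
      induction k with
      | zero =>
          intro i j
          show (Matrix.of fun i j => if i = j then (1:ℝ) else 0) i j * x j ≤ x i
          simp only [Matrix.of_apply]
          split
          · next h => subst h; simp
          · rw [zero_mul]; exact (hx i).le
      | succ k ih =>
          intro i j
          show mtMul (mtPow D k) D i j * x j ≤ x i
          obtain ⟨l, hl⟩ := MtAux.csup_exists (fun l => mtPow D k i l * D l j)
          rw [MtAux.mtMul_entry, hl]
          calc mtPow D k i l * D l j * x j = mtPow D k i l * (D l j * x j) := mul_assoc _ _ _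
          _ ≤ mtPow D k i l * x l :=
              mul_le_mul_of_nonneg_left (hDx l j) (MtAux.mtPow_nonneg hDnn k i l)
          _ ≤ x i := ih i l
    refine ⟨x, hx, ?_⟩
    funext i
    refine le_antisymm ?_ ?_
    · calc x i = 1 * x i := (one_mul _).symm
      _ ≤ mtStar D i i * x i :=
          mul_le_mul_of_nonneg_right (MtAux.one_le_mtStar_diag D i) (hx i).le
      _ ≤ ⨆ j, mtStar D i j * x j := MtAux.le_csup (fun j => mtStar D i j * x j) i
    · refine MtAux.csup_le (fun j => ?_)
      show mtStar D i j * x j ≤ x i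
      obtain ⟨k0, hk0⟩ := MtAux.csup_exists (fun k : Fin n => mtPow D (k : ℕ) i j)
      have hst : mtStar D i j = ⨆ k : Fin n, mtPow D (k : ℕ) i j := rfl
      rw [hst, hk0]
      exact hPx _ i j
  · rintro ⟨u, hu, hxu⟩
    have hDstarle : ∀ i v l, D i v * mtStar D v l ≤ mtStar D i l := by
      intro i v l
      obtain ⟨k0, hk0⟩ := MtAux.csup_exists (fun k : Fin n => mtPow D (k : ℕ) v l)
      have hst : mtStar D v l = ⨆ k : Fin n, mtPow D (k : ℕ) v l := rfl
      rcases MtAux.mtPow_attain hDnn (k0 : ℕ) v l with h0 | ⟨s, hslen, hslast, hsval⟩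
      · rw [hst, hk0, h0, mul_zero]
        exact MtAux.mtStar_nonneg hDnn i l
      · rw [hst, hk0, hsval]
        have h1 : D i v * MtAux.pprod D v s = MtAux.pprod D i (v :: s) := rfl
        rw [h1]
        have hb := MtAux.pprod_le_mtStar hDnn hDcyc i (v :: s)
        rwa [MtAux.lastP_cons, hslast] at hb
    have hxval : ∀ i, x i = ⨆ l, mtStar D i l * u l := fun i => by rw [hxu]; rfl
    have hDx : ∀ i v, D i v * x v ≤ x i := by
      intro i v
      obtain ⟨l0, hl0⟩ := MtAux.csup_exists (fun l => mtStar D v l * u l)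
      rw [hxval v, hl0, hxval i]
      calc D i v * (mtStar D v l0 * u l0) = (D i v * mtStar D v l0) * u l0 := by ring
      _ ≤ mtStar D i l0 * u l0 :=
          mul_le_mul_of_nonneg_right (hDstarle i v l0) (hu l0).le
      _ ≤ ⨆ l, mtStar D i l * u l := MtAux.le_csup (fun l => mtStar D i l * u l) l0
    have hfeas : ∀ i, (⨆ j, C i j * x j) ≤ x i := by
      intro i
      refine MtAux.csup_le (fun j => ?_)
      exact le_trans (mul_le_mul_of_nonneg_right (hCD i j) (hx j).le) (hDx i j)
    have hBx : ∀ i j, B i j * x j ≤ θ * x i := by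
      intro i j
      have h1 : θ⁻¹ * B i j * x j ≤ x i :=
        le_trans (mul_le_mul_of_nonneg_right (hθinvBD i j) (hx j).le) (hDx i j)
      calc B i j * x j = θ * (θ⁻¹ * B i j * x j) := by field_simp
      _ ≤ θ * x i := mul_le_mul_of_nonneg_left h1 (by positivity)
    refine ⟨hfeas, le_antisymm ?_ (hLB hfeas)⟩
    rw [hrho_eq]
    apply max_le
    · refine ciSup_le (fun p => ?_)
      rw [div_le_iff₀ (hx p.1)]
      calc A p.1 p.2 * x p.2 ≤ B p.1 p.2 * x p.2 :=
            mul_le_mul_of_nonneg_right (by rw [hB]; exact le_max_left _ _) (hx p.2).le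
      _ ≤ θ * x p.1 := hBx _ _
    · refine Real.sSup_le ?_ (by linarith)
      rintro r ⟨i, j, hAij, rfl⟩
      rw [div_le_iff₀ (mul_pos hAij (hx j))]
      have h2 : (A i j)⁻¹ * x i ≤ θ * x j :=
        le_trans (mul_le_mul_of_nonneg_right
          (by rw [hB j i]; exact le_max_right _ _) (hx i).le) (hBx j i)
      calc x i = A i j * ((A i j)⁻¹ * x i) := by field_simp
      _ ≤ A i j * (θ * x j) := mul_le_mul_of_nonneg_left h2 hAij.le
      _ = θ * (A i j * x j) := by ring


end
end

section
/- Let n ≥ 1 and let A be an n×n real matrix with all entries positive. If λ ≥ 0 and x ∈ ℝ^n is a nonzero nonnegative vector such that max_j A_{ij} x_j = λ x_i for every i, then λ = λ(A), the max-times spectral radius of A. In particular, a matrix with all entries positive has exactly one max-times eigenvalue. -/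
open scoped BigOperators

noncomputable section

private lemma shift_bij {k : ℕ} (hk : 0 < k) :
    Function.Bijective (fun t : Fin k => (⟨((t : ℕ) + 1) % k, Nat.mod_lt _ hk⟩ : Fin k)) := by
  rw [Fintype.bijective_iff_injective_and_card]
  refine ⟨fun a b hab => ?_, rfl⟩
  have h := congrArg Fin.val hab
  simp only [] at h
  have ha := a.isLt
  have hb := b.isLt
  have ea : ((a : ℕ) + 1) % k = if (a : ℕ) + 1 = k then 0 else (a : ℕ) + 1 := by
    split_ifs with h'
    · simp [h']
    · exact Nat.mod_eq_of_lt (by omega)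
  have eb : ((b : ℕ) + 1) % k = if (b : ℕ) + 1 = k then 0 else (b : ℕ) + 1 := by
    split_ifs with h'
    · simp [h']
    · exact Nat.mod_eq_of_lt (by omega)
  apply Fin.ext
  rw [ea, eb] at h
  split_ifs at h <;> omega

private lemma cycle_prod_eq {n k : ℕ} (hk : 0 < k) (lam : ℝ) (x : Fin n → ℝ)
    (hxpos : ∀ i, 0 < x i) (f : Fin k → Fin n) :
    (∏ t : Fin k, lam * x (f t) / x (f ⟨((t : ℕ) + 1) % k, Nat.mod_lt _ hk⟩)) = lam ^ k := by
  have hshift : (∏ t : Fin k, x (f ⟨((t : ℕ) + 1) % k, Nat.mod_lt _ hk⟩))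
      = ∏ t : Fin k, x (f t) :=
    Fintype.prod_bijective _ (shift_bij hk) _ _ (fun t => rfl)
  have hP : (∏ t : Fin k, x (f t)) ≠ 0 :=
    (Finset.prod_pos (fun t _ => hxpos _)).ne'
  rw [Finset.prod_div_distrib, Finset.prod_mul_distrib, Finset.prod_const,
    Finset.card_univ, Fintype.card_fin, hshift, mul_div_assoc, div_self hP, mul_one]

private lemma pow_rpow_inv {k : ℕ} (hk : 0 < k) {lam : ℝ} (hlam : 0 ≤ lam) :
    (lam ^ k) ^ ((k : ℝ)⁻¹) = lam := by
  rw [← Real.rpow_natCast lam k, ← Real.rpow_mul hlam,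
    mul_inv_cancel₀ (by exact_mod_cast hk.ne'), Real.rpow_one]

/-- If `A` has all entries positive, `λ ≥ 0`, and `x` is a nonzero
nonnegative vector with `max_j A_{ij} x_j = λ x_i` for all `i`, then `λ` equals the
max-times spectral radius of `A`; in particular, a positive matrix has exactly one
max-times eigenvalue. -/
theorem mt_eigenvalue_unique {n : ℕ} (hn : 1 ≤ n) (A : Matrix (Fin n) (Fin n) ℝ)
    (hA : ∀ i j, 0 < A i j) (lam : ℝ) (hlam : 0 ≤ lam)
    (x : Fin n → ℝ) (hx : ∀ i, 0 ≤ x i) (hx0 : x ≠ 0)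
    (heig : ∀ i, (⨆ j, A i j * x j) = lam * x i) :
    lam = mtSpecRad A := by
  haveI : Nonempty (Fin n) := ⟨⟨0, hn⟩⟩
  obtain ⟨j0, hj0⟩ : ∃ j, x j ≠ 0 := Function.ne_iff.mp hx0
  have hj0' : 0 < x j0 := lt_of_le_of_ne (hx j0) (Ne.symm hj0)
  have hbdd : ∀ i, BddAbove (Set.range fun j => A i j * x j) :=
    fun i => (Set.finite_range _).bddAbove
  have hle : ∀ i j, A i j * x j ≤ lam * x i := fun i j => (heig i) ▸ le_ciSup (hbdd i) j
  have hpos : ∀ i, 0 < lam * x i :=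
    fun i => lt_of_lt_of_le (mul_pos (hA i j0) hj0') (hle i j0)
  have hxpos : ∀ i, 0 < x i := by
    intro i
    rcases (hx i).lt_or_eq with h | h
    · exact h
    · exfalso; have := hpos i; rw [← h, mul_zero] at this; exact lt_irrefl 0 this
  -- choose a maximizing column for each row
  have hsig : ∀ i, ∃ j, A i j * x j = lam * x i := by
    intro i
    obtain ⟨j, hj⟩ := Finite.exists_max (fun j : Fin n => A i j * x j)
    exact ⟨j, le_antisymm (hle i j) ((heig i).symm ▸ ciSup_le hj)⟩
  choose σ hσ using hsig
  set S := { r : ℝ | ∃ (k : ℕ) (hk : 0 < k), k ≤ n ∧ ∃ f : Fin k → Fin n,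
    r = (∏ t : Fin k, A (f t) (f ⟨((t : ℕ) + 1) % k, Nat.mod_lt _ hk⟩)) ^ ((k : ℝ)⁻¹) } with hS
  -- every element of S is ≤ lam
  have hub : ∀ r ∈ S, r ≤ lam := by
    rintro r ⟨k, hk, hkn, f, rfl⟩
    have hprod : (∏ t : Fin k, A (f t) (f ⟨((t : ℕ) + 1) % k, Nat.mod_lt _ hk⟩)) ≤ lam ^ k := by
      calc (∏ t : Fin k, A (f t) (f ⟨((t : ℕ) + 1) % k, Nat.mod_lt _ hk⟩))
          ≤ ∏ t : Fin k, lam * x (f t) / x (f ⟨((t : ℕ) + 1) % k, Nat.mod_lt _ hk⟩) := by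
            refine Finset.prod_le_prod (fun t _ => (hA _ _).le) (fun t _ => ?_)
            rw [le_div_iff₀ (hxpos _)]
            exact hle _ _
        _ = lam ^ k := cycle_prod_eq hk lam x hxpos f
    calc (∏ t : Fin k, A (f t) (f ⟨((t : ℕ) + 1) % k, Nat.mod_lt _ hk⟩)) ^ ((k : ℝ)⁻¹)
        ≤ (lam ^ k) ^ ((k : ℝ)⁻¹) := by
          apply Real.rpow_le_rpow (Finset.prod_nonneg (fun t _ => (hA _ _).le)) hprod
          positivity
      _ = lam := pow_rpow_inv hk hlam
  -- find a cycle of σ by pigeonhole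
  obtain ⟨a, b, hab, hiter⟩ :=
    Fintype.exists_ne_map_eq_of_card_lt (fun t : Fin (n + 1) => σ^[(t : ℕ)] j0) (by simp)
  -- wlog a < b
  obtain ⟨a', b', ha'b', hb'n, hiter'⟩ :
      ∃ a' b' : ℕ, a' < b' ∧ b' ≤ n ∧ σ^[a'] j0 = σ^[b'] j0 := by
    rcases lt_or_gt_of_ne hab with h | h
    · exact ⟨a, b, h, Nat.lt_succ_iff.mp b.isLt, hiter⟩
    · exact ⟨b, a, h, Nat.lt_succ_iff.mp a.isLt, hiter.symm⟩
  set k := b' - a' with hkdef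
  have hk : 0 < k := Nat.sub_pos_of_lt ha'b'
  have hkn : k ≤ n := le_trans (Nat.sub_le _ _) hb'n
  set p := σ^[a'] j0 with hpdef
  have hp : σ^[k] p = p := by
    rw [hpdef, ← Function.iterate_add_apply, hkdef, Nat.sub_add_cancel ha'b'.le, ← hiter']
  set f : Fin k → Fin n := fun t => σ^[(t : ℕ)] p with hfdef
  have hf : ∀ t : Fin k, f ⟨((t : ℕ) + 1) % k, Nat.mod_lt _ hk⟩ = σ (f t) := by
    intro t
    have ht := t.isLt
    by_cases h : (t : ℕ) + 1 = k
    · have : ((t : ℕ) + 1) % k = 0 := by rw [h, Nat.mod_self]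
      simp only [hfdef, this, Function.iterate_zero, id_eq]
      rw [← Function.iterate_succ_apply' σ (t : ℕ) p, Nat.succ_eq_add_one, h, hp]
    · have : ((t : ℕ) + 1) % k = (t : ℕ) + 1 := Nat.mod_eq_of_lt (by omega)
      simp only [hfdef, this]
      rw [Function.iterate_succ_apply']
  have hterm : ∀ t : Fin k, A (f t) (f ⟨((t : ℕ) + 1) % k, Nat.mod_lt _ hk⟩)
      = lam * x (f t) / x (f ⟨((t : ℕ) + 1) % k, Nat.mod_lt _ hk⟩) := by
    intro t
    rw [eq_div_iff (hxpos _).ne']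
    rw [hf t]
    exact hσ (f t)
  have hprodeq : (∏ t : Fin k, A (f t) (f ⟨((t : ℕ) + 1) % k, Nat.mod_lt _ hk⟩)) = lam ^ k := by
    rw [Finset.prod_congr rfl (fun t _ => hterm t)]
    exact cycle_prod_eq hk lam x hxpos f
  have hmem : lam ∈ S := ⟨k, hk, hkn, f, by rw [hprodeq, pow_rpow_inv hk hlam]⟩
  rw [mtSpecRad, ← hS]
  exact le_antisymm (le_csSup ⟨lam, fun r hr => hub r hr⟩ hmem) (csSup_le ⟨lam, hmem⟩ hub)


end
end

section
/- Let n ≥ 1 and let A be an n×n nonnegative real matrix. Then max_{1≤k≤n} ( max_i (A^{⊗k})_{ii} )^{1/k} = λ(A), i.e., the trace-based expression tr(A) ⊕ tr^{1/2}(A^{⊗2}) ⊕ ⋯ ⊕ tr^{1/n}(A^{⊗n}) for the max-times spectral radius coincides with the maximum geometric cycle mean max_{1≤k≤n} max_{i_1,…,i_k} (A_{i_1 i_2} A_{i_2 i_3} ⋯ A_{i_k i_1})^{1/k}. -/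
open scoped BigOperators

noncomputable section

lemma mtPow_nonneg {n : ℕ} (A : Matrix (Fin n) (Fin n) ℝ) (hA : ∀ i j, 0 ≤ A i j) :
    ∀ k i j, 0 ≤ mtPow A k i j := by
  intro k
  induction k with
  | zero => intro i j; simp only [mtPow, Matrix.of_apply]; positivity
  | succ k ih =>
    intro i j
    exact Real.iSup_nonneg fun m => mul_nonneg (ih i m) (hA m j)

lemma walk_le {n : ℕ} (A : Matrix (Fin n) (Fin n) ℝ) (hA : ∀ i j, 0 ≤ A i j) :
    ∀ (k : ℕ) (g : Fin (k + 1) → Fin n),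
      (∏ t : Fin k, A (g t.castSucc) (g t.succ)) ≤ mtPow A k (g 0) (g (Fin.last k)) := by
  intro k
  induction k with
  | zero => intro g; simp [mtPow]
  | succ k ih =>
    intro g
    rw [Fin.prod_univ_castSucc]
    have h1 : (∏ t : Fin k, A (g t.castSucc.castSucc) (g t.castSucc.succ))
        ≤ mtPow A k (g 0) (g ((Fin.last k).castSucc)) := by
      have := ih (fun t => g t.castSucc)
      simpa only [Fin.succ_castSucc, Fin.castSucc_zero] using this
    have hb : BddAbove (Set.range fun m : Fin n =>
        mtPow A k (g 0) m * A m (g (Fin.last (k+1)))) :=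
      Set.Finite.bddAbove (Set.finite_range _)
    have h2 : mtPow A k (g 0) (g ((Fin.last k).castSucc)) * A (g ((Fin.last k).castSucc)) (g (Fin.last (k+1)))
        ≤ mtPow A (k + 1) (g 0) (g (Fin.last (k+1))) := le_ciSup hb _
    refine le_trans ?_ h2
    exact mul_le_mul_of_nonneg_right h1 (hA _ _)

lemma exists_walk {n : ℕ} (A : Matrix (Fin n) (Fin n) ℝ) (hA : ∀ i j, 0 ≤ A i j) [NeZero n] :
    ∀ (k : ℕ) (i j : Fin n), ∃ g : Fin (k + 2) → Fin n, g 0 = i ∧ g (Fin.last (k + 1)) = j ∧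
      mtPow A (k + 1) i j ≤ ∏ t : Fin (k + 1), A (g t.castSucc) (g t.succ) := by
  intro k
  induction k with
  | zero =>
    intro i j
    refine ⟨![i, j], rfl, rfl, ?_⟩
    have : mtPow A 1 i j ≤ A i j := by
      refine Real.iSup_le (fun m => ?_) (hA i j)
      simp only [mtPow, mtMul, Matrix.of_apply]
      by_cases h : i = m
      · subst h; simp
      · simpa [h] using hA i j
    simpa using this
  | succ k ih =>
    intro i j
    obtain ⟨m, hm⟩ := Finite.exists_max (fun m : Fin n => mtPow A (k + 1) i m * A m j)
    obtain ⟨g', hg0, hgl, hle⟩ := ih i m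
    refine ⟨Fin.snoc g' j, ?_, ?_, ?_⟩
    · rw [show (0 : Fin (k + 3)) = Fin.castSucc 0 by rfl, Fin.snoc_castSucc]; exact hg0
    · simp
    · have htop : mtPow A (k + 2) i j ≤ mtPow A (k + 1) i m * A m j :=
        Real.iSup_le hm (mul_nonneg (mtPow_nonneg A hA _ i m) (hA m j))
      refine htop.trans ?_
      rw [Fin.prod_univ_castSucc]
      have heq : ∀ t : Fin (k + 1),
          A ((Fin.snoc g' j : Fin (k+3) → Fin n) t.castSucc.castSucc)
            ((Fin.snoc g' j : Fin (k+3) → Fin n) t.castSucc.succ)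
          = A (g' t.castSucc) (g' t.succ) := by
        intro t
        rw [Fin.snoc_castSucc, Fin.succ_castSucc, Fin.snoc_castSucc]
      have hlast : (Fin.snoc g' j : Fin (k+3) → Fin n) (Fin.last (k+1)).castSucc = m := by
        rw [Fin.snoc_castSucc]; exact hgl
      calc mtPow A (k + 1) i m * A m j
          ≤ (∏ t : Fin (k + 1), A (g' t.castSucc) (g' t.succ)) * A m j :=
            mul_le_mul_of_nonneg_right hle (hA m j)
        _ = _ := by
            rw [Finset.prod_congr rfl (fun t _ => (heq t).symm), hlast]
            simp
/-- The trace-based expression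
`tr(A) ⊕ tr^{1/2}(A^{⊗2}) ⊕ ⋯ ⊕ tr^{1/n}(A^{⊗n})` equals the max-times spectral
radius (maximum geometric cycle mean) of a nonnegative matrix `A`. -/
theorem mt_specRad_trace {n : ℕ} (hn : 1 ≤ n) (A : Matrix (Fin n) (Fin n) ℝ)
    (hA : ∀ i j, 0 ≤ A i j) :
    (⨆ k : Fin n, (⨆ i, mtPow A ((k : ℕ) + 1) i i) ^ ((((k : ℕ) + 1 : ℕ) : ℝ)⁻¹)) =
      mtSpecRad A := by
  haveI : NeZero n := ⟨Nat.one_le_iff_ne_zero.mp hn⟩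
  set S := { r : ℝ | ∃ (k : ℕ) (hk : 0 < k), k ≤ n ∧ ∃ f : Fin k → Fin n,
    r = (∏ t : Fin k, A (f t) (f ⟨((t : ℕ) + 1) % k, Nat.mod_lt _ hk⟩)) ^ ((k : ℝ)⁻¹) } with hS
  have hbddI : ∀ K : ℕ, BddAbove (Set.range fun i : Fin n => mtPow A K i i) :=
    fun K => Set.Finite.bddAbove (Set.finite_range _)
  have hiSup_nonneg : ∀ K : ℕ, 0 ≤ ⨆ i, mtPow A K i i :=
    fun K => Real.iSup_nonneg fun i => mtPow_nonneg A hA K i i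
  -- Step 1: every element of S is at most the LHS
  have hLb : BddAbove (Set.range fun k : Fin n =>
      (⨆ i, mtPow A ((k : ℕ) + 1) i i) ^ ((((k : ℕ) + 1 : ℕ) : ℝ)⁻¹)) :=
    Set.Finite.bddAbove (Set.finite_range _)
  have bound : ∀ r ∈ S, r ≤
      ⨆ k : Fin n, (⨆ i, mtPow A ((k : ℕ) + 1) i i) ^ ((((k : ℕ) + 1 : ℕ) : ℝ)⁻¹) := by
    rintro r ⟨k, hk, hkn, f, rfl⟩
    obtain ⟨m, rfl⟩ : ∃ m, k = m + 1 := ⟨k - 1, (Nat.succ_pred_eq_of_pos hk).symm⟩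
    set g : Fin (m + 2) → Fin n := fun t => f ⟨(t : ℕ) % (m + 1), Nat.mod_lt _ hk⟩ with hg
    have hprod : (∏ t : Fin (m + 1), A (g t.castSucc) (g t.succ))
        = ∏ t : Fin (m + 1), A (f t) (f ⟨((t : ℕ) + 1) % (m + 1), Nat.mod_lt _ hk⟩) := by
      refine Finset.prod_congr rfl fun t _ => ?_
      have h1 : g t.castSucc = f t := by
        apply congrArg f; ext; simp [hg, Nat.mod_eq_of_lt t.isLt]
      have h2 : g t.succ = f ⟨((t : ℕ) + 1) % (m + 1), Nat.mod_lt _ hk⟩ := rfl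
      rw [h1, h2]
    have h0 : g 0 = f 0 := by
      apply congrArg f; ext; simp [hg]
    have hlast : g (Fin.last (m + 1)) = f 0 := by
      apply congrArg f; ext; simp [hg]
    have hw := walk_le A hA (m + 1) g
    rw [hprod, h0, hlast] at hw
    have hw2 : (∏ t : Fin (m + 1), A (f t) (f ⟨((t : ℕ) + 1) % (m + 1), Nat.mod_lt _ hk⟩))
        ≤ ⨆ i, mtPow A (m + 1) i i :=
      hw.trans (le_ciSup (hbddI (m + 1)) (f 0))
    have hmn : m < n := Nat.lt_of_succ_le hkn
    have hterm : (∏ t : Fin (m + 1), A (f t) (f ⟨((t : ℕ) + 1) % (m + 1), Nat.mod_lt _ hk⟩))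
          ^ (((m + 1 : ℕ) : ℝ))⁻¹
        ≤ (⨆ i, mtPow A (m + 1) i i) ^ (((m + 1 : ℕ) : ℝ))⁻¹ :=
      Real.rpow_le_rpow (Finset.prod_nonneg fun t _ => hA _ _) hw2 (by positivity)
    refine hterm.trans ?_
    exact le_ciSup hLb (⟨m, hmn⟩ : Fin n)
  have hbddS : BddAbove S := ⟨_, bound⟩
  -- Step 2: each LHS term is at most some element of S
  have key : ∀ k : Fin n, ∃ r ∈ S, 0 ≤ r ∧
      (⨆ i, mtPow A ((k : ℕ) + 1) i i) ^ ((((k : ℕ) + 1 : ℕ) : ℝ)⁻¹) ≤ r := by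
    intro k
    obtain ⟨i0, hi0⟩ := Finite.exists_max (fun i : Fin n => mtPow A ((k : ℕ) + 1) i i)
    have hd : (⨆ i, mtPow A ((k : ℕ) + 1) i i) ≤ mtPow A ((k : ℕ) + 1) i0 i0 :=
      Real.iSup_le hi0 (mtPow_nonneg A hA _ i0 i0)
    obtain ⟨g, hg0, hgl, hle⟩ := exists_walk A hA (k : ℕ) i0 i0
    set f : Fin ((k : ℕ) + 1) → Fin n := fun t => g t.castSucc with hf
    have hkpos : 0 < (k : ℕ) + 1 := Nat.succ_pos _
    have hprod : (∏ t : Fin ((k : ℕ) + 1), A (g t.castSucc) (g t.succ))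
        = ∏ t : Fin ((k : ℕ) + 1),
            A (f t) (f ⟨((t : ℕ) + 1) % ((k : ℕ) + 1), Nat.mod_lt _ hkpos⟩) := by
      refine Finset.prod_congr rfl fun t _ => ?_
      have h1 : f t = g t.castSucc := rfl
      have h2 : g t.succ = f ⟨((t : ℕ) + 1) % ((k : ℕ) + 1), Nat.mod_lt _ hkpos⟩ := by
        by_cases h : (t : ℕ) + 1 < (k : ℕ) + 1
        · apply congrArg g; ext; simp [hf, Nat.mod_eq_of_lt h]
        · have ht : (t : ℕ) + 1 = (k : ℕ) + 1 :=
            le_antisymm (Nat.succ_le_of_lt t.isLt) (not_lt.mp h)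
          have hts : t.succ = Fin.last ((k : ℕ) + 1) := by ext; simpa using ht
          have hmod : ((t : ℕ) + 1) % ((k : ℕ) + 1) = 0 := by rw [ht, Nat.mod_self]
          have : f ⟨((t : ℕ) + 1) % ((k : ℕ) + 1), Nat.mod_lt _ hkpos⟩ = g 0 := by
            apply congrArg g; ext; simp [hf, hmod]
          rw [this, hg0, hts, hgl]
      rw [h1, h2]
    rw [hprod] at hle
    refine ⟨(∏ t : Fin ((k : ℕ) + 1),
        A (f t) (f ⟨((t : ℕ) + 1) % ((k : ℕ) + 1), Nat.mod_lt _ hkpos⟩)) ^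
          ((((k : ℕ) + 1 : ℕ) : ℝ))⁻¹, ?_, ?_, ?_⟩
    · exact ⟨(k : ℕ) + 1, hkpos, Nat.succ_le_of_lt k.isLt, f, rfl⟩
    · exact Real.rpow_nonneg (Finset.prod_nonneg fun t _ => hA _ _) _
    · exact Real.rpow_le_rpow (hiSup_nonneg _) (hd.trans hle) (by positivity)
  obtain ⟨r0, hr0S, hr0n, _⟩ := key ⟨0, hn⟩
  have hsSup_nonneg : 0 ≤ sSup S := hr0n.trans (le_csSup hbddS hr0S)
  apply le_antisymm
  · refine Real.iSup_le (fun k => ?_) hsSup_nonneg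
    obtain ⟨r, hrS, _, hle⟩ := key k
    exact hle.trans (le_csSup hbddS hrS)
  · refine Real.sSup_le bound ?_
    exact Real.iSup_nonneg fun k => Real.rpow_nonneg (hiSup_nonneg _) _

end
end

section
/- Let n ≥ 1, let A be an n×n real matrix with all entries positive, and let x ∈ ℝ_{>0}^n be a positive vector. Then max_{i,j} max( A_{ij} x_j / x_i , x_i / (A_{ij} x_j) ) = max_{i,j} max( A_{ij}, 1/A_{ji} ) · x_j / x_i; that is, the Chebyshev-like distance between A and the rank-one reciprocal matrix (x_i/x_j) equals the value of the quadratic form x^{-}(A ⊕ A^{-})x, where B_{ij} = max(A_{ij}, 1/A_{ji}). -/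
open scoped BigOperators

noncomputable section

/-- For a positive matrix `A` and positive vector `x`, the Chebyshev-like
distance between `A` and the rank-one reciprocal matrix `(x_i/x_j)` equals the
max-times quadratic form `x⁻(A ⊕ A⁻)x`, where `B_{ij} = max(A_{ij}, 1/A_{ji})`. -/
theorem mt_rho_quad_form {n : ℕ} (hn : 1 ≤ n) (A : Matrix (Fin n) (Fin n) ℝ)
    (hA : ∀ i j, 0 < A i j) (x : Fin n → ℝ) (hx : ∀ i, 0 < x i) :
    (⨆ p : Fin n × Fin n,
        max (A p.1 p.2 * x p.2 / x p.1) (x p.1 / (A p.1 p.2 * x p.2))) =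
      ⨆ p : Fin n × Fin n, max (A p.1 p.2) (A p.2 p.1)⁻¹ * x p.2 / x p.1 := by
  haveI : NeZero n := ⟨by omega⟩
  haveI : Nonempty (Fin n × Fin n) := ⟨(⟨0, hn⟩, ⟨0, hn⟩)⟩
  have hbddL : BddAbove (Set.range fun p : Fin n × Fin n =>
      max (A p.1 p.2 * x p.2 / x p.1) (x p.1 / (A p.1 p.2 * x p.2))) :=
    (Set.finite_range _).bddAbove
  have hbddR : BddAbove (Set.range fun p : Fin n × Fin n =>
      max (A p.1 p.2) (A p.2 p.1)⁻¹ * x p.2 / x p.1) :=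
    (Set.finite_range _).bddAbove
  apply le_antisymm
  · refine ciSup_le fun p => max_le ?_ ?_
    · refine le_trans ?_ (le_ciSup hbddR p)
      gcongr
      all_goals first | exact (hx _).le | exact le_sup_left
    · refine le_trans ?_ (le_ciSup hbddR (p.2, p.1))
      have : x p.1 / (A p.1 p.2 * x p.2) = (A p.1 p.2)⁻¹ * x p.1 / x p.2 := by
        field_simp
      rw [this]
      gcongr
      all_goals first | exact (hx _).le | exact le_sup_right
  · refine ciSup_le fun p => ?_
    rcases max_cases (A p.1 p.2) (A p.2 p.1)⁻¹ with ⟨h, _⟩ | ⟨h, _⟩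
    · rw [h]
      exact le_trans (le_max_left _ _) (le_ciSup hbddL p)
    · rw [h]
      refine le_trans ?_ (le_ciSup hbddL (p.2, p.1))
      refine le_trans (le_of_eq ?_) (le_max_right _ _)
      field_simp

end
end
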